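/- arXiv:1802.09572 — 6 statements merged into one kernel-verified Lean document; each statement's English description precedes it below -/
import Mathlib

section
/- Let φ:(0,∞)→ℝ be continuously differentiable with φ' nowhere zero, strictly monotonic, with inf φ = a ∈ ℝ∪{-∞} and sup φ = ∞. Let ρ_K ∈ C(S^{n-1}) be strictly positive and g ∈ C(S^{n-1}). For ε near 0 define ρ_ε(u) = φ^{-1}(φ(ρ_K(u)) + ε g(u)). Then (ρ_ε(u) − ρ_K(u))/ε converges to g(u)/φ'(ρ_K(u)) uniformly on S^{n-1} as ε→0. -/
open MeasureTheory Metric Set Filter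
open scoped RealInnerProductSpace NNReal ENNReal Topology

noncomputable section

abbrev Euc (n : ℕ) := EuclideanSpace ℝ (Fin n)

def usphere (n : ℕ) : Set (Euc n) := Metric.sphere 0 1

def smeas (n : ℕ) : Measure (Euc n) := (μH[(n : ℝ) - 1]).restrict (usphere n)

set_option maxHeartbeats 1000000 in
lemma helper_mono (n : ℕ) (φ φ' : ℝ → ℝ)
    (hφdiff : ∀ t ∈ Ioi (0:ℝ), HasDerivAt φ (φ' t) t)
    (hφ'cont : ContinuousOn φ' (Ioi 0))
    (hφ'ne : ∀ t ∈ Ioi (0:ℝ), φ' t ≠ 0)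
    (hmono : StrictMonoOn φ (Ioi 0))
    (ρK g : Euc n → ℝ)
    (hρK : ContinuousOn ρK (usphere n)) (hρKpos : ∀ u ∈ usphere n, 0 < ρK u)
    (hg : ContinuousOn g (usphere n))
    (δ : ℝ) (hδ : 0 < δ) (ρe : ℝ → Euc n → ℝ)
    (hρe : ∀ ε ∈ Ioo (-δ) δ, ∀ u ∈ usphere n,
      0 < ρe ε u ∧ φ (ρe ε u) = φ (ρK u) + ε * g u) :
    TendstoUniformlyOn (fun ε u => (ρe ε u - ρK u) / ε)
      (fun u => g u / φ' (ρK u)) (𝓝[≠] (0:ℝ)) (usphere n) := by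
  rcases (usphere n).eq_empty_or_nonempty with hS | hS
  · rw [hS]; exact tendstoUniformlyOn_empty
  have hScomp : IsCompact (usphere n) := isCompact_sphere 0 1
  -- min and max of ρK
  obtain ⟨u1, hu1, hu1min⟩ := hScomp.exists_isMinOn hS hρK
  obtain ⟨u2, hu2, hu2max⟩ := hScomp.exists_isMaxOn hS hρK
  set m : ℝ := ρK u1 with hm_def
  set M : ℝ := ρK u2 with hM_def
  have hm : 0 < m := hρKpos u1 hu1
  have hmM : m ≤ M := hu2max hu1
  have hρKm : ∀ u ∈ usphere n, m ≤ ρK u := fun u hu => hu1min hu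
  have hρKM : ∀ u ∈ usphere n, ρK u ≤ M := fun u hu => hu2max hu
  -- bound on g
  obtain ⟨u3, hu3, hu3max⟩ := hScomp.exists_isMaxOn hS hg.abs
  set G : ℝ := |g u3| with hG_def
  have hG0 : 0 ≤ G := abs_nonneg _
  have hGbd : ∀ u ∈ usphere n, |g u| ≤ G := fun u hu => hu3max hu
  -- the compact interval K
  set K : Set ℝ := Icc (m/2) (M+1) with hK_def
  have hm2 : 0 < m/2 := by linarith
  have hKsub : K ⊆ Ioi (0:ℝ) := fun x hx => lt_of_lt_of_le hm2 hx.1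
  have hKne : (m/2) ≤ M+1 := by linarith
  have hρKK : ∀ u ∈ usphere n, ρK u ∈ K := fun u hu =>
    ⟨by have := hρKm u hu; linarith, by have := hρKM u hu; linarith⟩
  -- lower bound c0 on |φ'| on K
  obtain ⟨t0, ht0K, ht0min⟩ := (isCompact_Icc (a := m/2) (b := M+1)).exists_isMinOn
    ⟨m/2, le_refl _, hKne⟩ ((hφ'cont.mono hKsub).abs)
  set c0 : ℝ := |φ' t0| with hc0_def
  have hc0 : 0 < c0 := abs_pos.mpr (hφ'ne t0 (hKsub ht0K))
  have hc0bd : ∀ t ∈ K, c0 ≤ |φ' t| := fun t ht => ht0min ht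
  -- gap r
  set r : ℝ := min (φ m - φ (m/2)) (φ (M+1) - φ M) with hr_def
  have hmm2 : (m/2 : ℝ) < m := by linarith
  have hr : 0 < r := by
    apply lt_min
    · have := hmono (hKsub ⟨le_refl _, hKne⟩) (mem_Ioi.mpr hm) hmm2
      linarith
    · have := hmono (mem_Ioi.mpr (lt_of_lt_of_le hm hmM))
        (hKsub ⟨hKne, le_refl _⟩) (by linarith : M < M + 1)
      linarith
  -- uniform continuity of φ' on K
  have huc := (isCompact_Icc (a := m/2) (b := M+1)).uniformContinuousOn_of_continuous
    (hφ'cont.mono hKsub)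
  rw [Metric.uniformContinuousOn_iff] at huc
  -- key bounds: ρe ε u ∈ K and |ρe ε u - ρK u| ≤ |ε| * G / c0
  have keyA : ∀ ε ∈ Ioo (-δ) δ, |ε| * G < r → ∀ u ∈ usphere n, ρe ε u ∈ K := by
    intro ε hεδ hεr u hu
    obtain ⟨hpos, heq⟩ := hρe ε hεδ u hu
    have hεg : |ε * g u| ≤ |ε| * G := by
      rw [abs_mul]
      exact mul_le_mul_of_nonneg_left (hGbd u hu) (abs_nonneg ε)
    have h1 : φ (m/2) < φ (ρe ε u) := by
      have hφmle : φ m ≤ φ (ρK u) := hmono.monotoneOn (mem_Ioi.mpr hm)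
        (mem_Ioi.mpr (hρKpos u hu)) (hρKm u hu)
      have : -(|ε| * G) ≤ ε * g u := by
        have := neg_abs_le (ε * g u); linarith
      have hrle : r ≤ φ m - φ (m/2) := min_le_left _ _
      rw [heq]; linarith
    have h2 : φ (ρe ε u) < φ (M+1) := by
      have hφMle : φ (ρK u) ≤ φ M := hmono.monotoneOn
        (mem_Ioi.mpr (hρKpos u hu)) (mem_Ioi.mpr (lt_of_lt_of_le hm hmM)) (hρKM u hu)
      have : ε * g u ≤ |ε| * G := le_trans (le_abs_self _) hεg
      have hrle : r ≤ φ (M+1) - φ M := min_le_right _ _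
      rw [heq]; linarith
    constructor
    · by_contra hc
      push_neg at hc
      exact absurd (hmono hpos (hKsub ⟨le_refl _, hKne⟩) hc) (by linarith)
    · by_contra hc
      push_neg at hc
      exact absurd (hmono (hKsub ⟨hKne, le_refl _⟩) hpos hc) (by linarith)
  -- main proof
  rw [Metric.tendstoUniformlyOn_iff]
  intro η hη
  -- choose modulus θ for φ' with target η'
  set η' : ℝ := η * c0^2 / (G+1) with hη'_def
  have hη' : 0 < η' := div_pos (mul_pos hη (pow_pos hc0 2)) (by linarith)
  obtain ⟨θ, hθ, hθmod⟩ := huc η' hη'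
  set ε0 : ℝ := min δ (min (r/(G+1)) (θ*c0/(G+1))) with hε0_def
  have hε0 : 0 < ε0 := by
    apply lt_min hδ
    exact lt_min (div_pos hr (by linarith)) (div_pos (mul_pos hθ hc0) (by linarith))
  have h1 : ∀ᶠ ε in 𝓝[≠] (0:ℝ), |ε| < ε0 := by
    apply eventually_nhdsWithin_of_eventually_nhds
    have := eventually_abs_sub_lt (0:ℝ) hε0
    simpa using this
  filter_upwards [h1, self_mem_nhdsWithin] with ε hεlt (hεne : ε ≠ 0)
  intro u hu
  have hεabs : 0 < |ε| := abs_pos.mpr hεne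
  have hεδ : ε ∈ Ioo (-δ) δ := by
    constructor
    · have : |ε| < δ := lt_of_lt_of_le hεlt (min_le_left _ _)
      linarith [neg_abs_le ε]
    · exact lt_of_lt_of_le (lt_of_le_of_lt (le_abs_self ε) hεlt) (min_le_left _ _)
  have hεr : |ε| * G < r := by
    have h : |ε| < r/(G+1) := lt_of_lt_of_le hεlt
      (le_trans (min_le_right _ _) (min_le_left _ _))
    calc |ε| * G ≤ |ε| * (G+1) := by nlinarith
      _ < (r/(G+1)) * (G+1) := by
          apply mul_lt_mul_of_pos_right h; linarith
      _ = r := by field_simp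
  have hεθ : |ε| * G / c0 < θ := by
    have h : |ε| < θ*c0/(G+1) := lt_of_lt_of_le hεlt
      (le_trans (min_le_right _ _) (min_le_right _ _))
    rw [div_lt_iff₀ hc0]
    calc |ε| * G ≤ |ε| * (G+1) := by nlinarith
      _ < (θ*c0/(G+1)) * (G+1) := by
          apply mul_lt_mul_of_pos_right h; linarith
      _ = θ * c0 := by field_simp
  obtain ⟨hpos, heq⟩ := hρe ε hεδ u hu
  have hρeK : ρe ε u ∈ K := keyA ε hεδ hεr u hu
  have hρKuK : ρK u ∈ K := hρKK u hu
  have hρKupos : 0 < ρK u := hρKpos u hu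
  -- trichotomy
  rcases lt_trichotomy (ρK u) (ρe ε u) with hlt | heq' | hgt
  · -- ρK u < ρe ε u : MVT on [ρK u, ρe ε u]
    have hsub : Icc (ρK u) (ρe ε u) ⊆ Ioi (0:ℝ) := fun x hx =>
      lt_of_lt_of_le hρKupos hx.1
    obtain ⟨c, hcmem, hc⟩ := exists_hasDerivAt_eq_slope φ φ' hlt
      (fun x hx => (hφdiff x (hsub hx)).continuousAt.continuousWithinAt)
      (fun x hx => hφdiff x (hsub (Ioo_subset_Icc_self hx)))
    have hcK : c ∈ K := ⟨le_trans hρKuK.1 (le_of_lt hcmem.1),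
      le_trans (le_of_lt hcmem.2) hρeK.2⟩
    have hcne : φ' c ≠ 0 := hφ'ne c (hKsub hcK)
    have hne : ρe ε u - ρK u ≠ 0 := sub_ne_zero.mpr (ne_of_gt hlt)
    have hslope : φ' c * (ρe ε u - ρK u) = ε * g u := by
      rw [hc, div_mul_cancel₀ _ hne]
      linarith [heq]
    -- distance |ρe - ρK| ≤ |ε| G / c0
    have hdist : |ρe ε u - ρK u| ≤ |ε| * G / c0 := by
      rw [le_div_iff₀ hc0]
      calc |ρe ε u - ρK u| * c0 ≤ |ρe ε u - ρK u| * |φ' c| :=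
            mul_le_mul_of_nonneg_left (hc0bd c hcK) (abs_nonneg _)
        _ = |ε * g u| := by rw [← abs_mul, mul_comm, hslope]
        _ ≤ |ε| * G := by
            rw [abs_mul]; exact mul_le_mul_of_nonneg_left (hGbd u hu) (abs_nonneg ε)
    have hcclose : dist c (ρK u) < θ := by
      rw [Real.dist_eq]
      have h1 : |c - ρK u| ≤ |ρe ε u - ρK u| := by
        rw [abs_of_pos (by linarith [hcmem.1] : (0:ℝ) < c - ρK u),
          abs_of_pos (by linarith : (0:ℝ) < ρe ε u - ρK u)]
        linarith [hcmem.2]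
      exact lt_of_le_of_lt (le_trans h1 hdist) hεθ
    have hφ'close : |φ' c - φ' (ρK u)| < η' := by
      have := hθmod c hcK (ρK u) hρKuK hcclose
      rwa [Real.dist_eq] at this
    -- the quotient equals g u / φ' c
    have hquot : (ρe ε u - ρK u) / ε = g u / φ' c := by
      rw [div_eq_div_iff hεne hcne]
      linear_combination hslope
    rw [Real.dist_eq, hquot]
    have hρKne : φ' (ρK u) ≠ 0 := hφ'ne _ (mem_Ioi.mpr hρKupos)
    have hdiff : g u / φ' (ρK u) - g u / φ' c =
        g u * (φ' c - φ' (ρK u)) / (φ' c * φ' (ρK u)) := by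
      field_simp [hcne, hρKne]
    rw [hdiff, abs_div, abs_mul, abs_mul]
    have hden : c0 * c0 ≤ |φ' c| * |φ' (ρK u)| :=
      mul_le_mul (hc0bd c hcK) (hc0bd _ hρKuK) (le_of_lt hc0) (abs_nonneg _)
    have hc0c0 : (0:ℝ) < c0 * c0 := mul_pos hc0 hc0
    calc |g u| * |φ' c - φ' (ρK u)| / (|φ' c| * |φ' (ρK u)|)
        ≤ G * η' / (c0 * c0) := by
          apply div_le_div₀ (mul_nonneg hG0 (le_of_lt hη'))
            (mul_le_mul (hGbd u hu) (le_of_lt hφ'close) (abs_nonneg _) hG0)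
            hc0c0 hden
      _ < η := by
          rw [div_lt_iff₀ hc0c0, hη'_def]
          have h : G * (η * c0 ^ 2 / (G + 1)) = G * η * c0 ^ 2 / (G + 1) := by ring
          rw [h, div_lt_iff₀ (by linarith : (0:ℝ) < G + 1)]
          nlinarith [mul_pos hη hc0c0]
  · -- equal: then g u = 0
    have hg0 : g u = 0 := by
      have : ε * g u = 0 := by rw [heq'] at heq; linarith
      rcases mul_eq_zero.mp this with h | h
      · exact absurd h hεne
      · exact h
    rw [Real.dist_eq, hg0, heq']
    simp [hη]
  · -- ρe ε u < ρK u : MVT on [ρe ε u, ρK u]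
    have hsub : Icc (ρe ε u) (ρK u) ⊆ Ioi (0:ℝ) := fun x hx =>
      lt_of_lt_of_le hpos hx.1
    obtain ⟨c, hcmem, hc⟩ := exists_hasDerivAt_eq_slope φ φ' hgt
      (fun x hx => (hφdiff x (hsub hx)).continuousAt.continuousWithinAt)
      (fun x hx => hφdiff x (hsub (Ioo_subset_Icc_self hx)))
    have hcK : c ∈ K := ⟨le_trans hρeK.1 (le_of_lt hcmem.1),
      le_trans (le_of_lt hcmem.2) hρKuK.2⟩
    have hcne : φ' c ≠ 0 := hφ'ne c (hKsub hcK)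
    have hne : ρK u - ρe ε u ≠ 0 := sub_ne_zero.mpr (ne_of_gt hgt)
    have h2 : φ' c * (ρK u - ρe ε u) = φ (ρK u) - φ (ρe ε u) := by
      rw [hc, div_mul_cancel₀ _ hne]
    have hslope : φ' c * (ρe ε u - ρK u) = ε * g u := by
      linear_combination (-1 : ℝ) * h2 + heq
    have hdist : |ρe ε u - ρK u| ≤ |ε| * G / c0 := by
      rw [le_div_iff₀ hc0]
      calc |ρe ε u - ρK u| * c0 ≤ |ρe ε u - ρK u| * |φ' c| :=
            mul_le_mul_of_nonneg_left (hc0bd c hcK) (abs_nonneg _)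
        _ = |ε * g u| := by rw [← abs_mul, mul_comm, hslope]
        _ ≤ |ε| * G := by
            rw [abs_mul]; exact mul_le_mul_of_nonneg_left (hGbd u hu) (abs_nonneg ε)
    have hcclose : dist c (ρK u) < θ := by
      rw [Real.dist_eq]
      have h1 : |c - ρK u| ≤ |ρe ε u - ρK u| := by
        rw [abs_of_neg (by linarith [hcmem.2] : c - ρK u < 0),
          abs_of_neg (by linarith : ρe ε u - ρK u < 0)]
        linarith [hcmem.1]
      exact lt_of_le_of_lt (le_trans h1 hdist) hεθ
    have hφ'close : |φ' c - φ' (ρK u)| < η' := by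
      have := hθmod c hcK (ρK u) hρKuK hcclose
      rwa [Real.dist_eq] at this
    have hquot : (ρe ε u - ρK u) / ε = g u / φ' c := by
      rw [div_eq_div_iff hεne hcne]
      linear_combination hslope
    rw [Real.dist_eq, hquot]
    have hρKne : φ' (ρK u) ≠ 0 := hφ'ne _ (mem_Ioi.mpr hρKupos)
    have hdiff : g u / φ' (ρK u) - g u / φ' c =
        g u * (φ' c - φ' (ρK u)) / (φ' c * φ' (ρK u)) := by
      field_simp [hcne, hρKne]
    rw [hdiff, abs_div, abs_mul, abs_mul]
    have hden : c0 * c0 ≤ |φ' c| * |φ' (ρK u)| :=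
      mul_le_mul (hc0bd c hcK) (hc0bd _ hρKuK) (le_of_lt hc0) (abs_nonneg _)
    have hc0c0 : (0:ℝ) < c0 * c0 := mul_pos hc0 hc0
    calc |g u| * |φ' c - φ' (ρK u)| / (|φ' c| * |φ' (ρK u)|)
        ≤ G * η' / (c0 * c0) := by
          apply div_le_div₀ (mul_nonneg hG0 (le_of_lt hη'))
            (mul_le_mul (hGbd u hu) (le_of_lt hφ'close) (abs_nonneg _) hG0)
            hc0c0 hden
      _ < η := by
          rw [div_lt_iff₀ hc0c0, hη'_def]
          have h : G * (η * c0 ^ 2 / (G + 1)) = G * η * c0 ^ 2 / (G + 1) := by ring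
          rw [h, div_lt_iff₀ (by linarith : (0:ℝ) < G + 1)]
          nlinarith [mul_pos hη hc0c0]

theorem stmt1 (n : ℕ) (a : EReal) (φ φ' : ℝ → ℝ)
    (hφdiff : ∀ t ∈ Ioi (0:ℝ), HasDerivAt φ (φ' t) t)
    (hφ'cont : ContinuousOn φ' (Ioi 0))
    (hφ'ne : ∀ t ∈ Ioi (0:ℝ), φ' t ≠ 0)
    (hmono : StrictMonoOn φ (Ioi 0) ∨ StrictAntiOn φ (Ioi 0))
    (hinf : ⨅ t : {t : ℝ // 0 < t}, (φ t.1 : EReal) = a)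
    (hsup : ⨆ t : {t : ℝ // 0 < t}, (φ t.1 : EReal) = ⊤)
    (ρK g : Euc n → ℝ)
    (hρK : ContinuousOn ρK (usphere n)) (hρKpos : ∀ u ∈ usphere n, 0 < ρK u)
    (hg : ContinuousOn g (usphere n))
    (δ : ℝ) (hδ : 0 < δ) (ρe : ℝ → Euc n → ℝ)
    (hρe : ∀ ε ∈ Ioo (-δ) δ, ∀ u ∈ usphere n,
      0 < ρe ε u ∧ φ (ρe ε u) = φ (ρK u) + ε * g u)
    (hρe0 : ∀ u ∈ usphere n, ρe 0 u = ρK u) :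
    TendstoUniformlyOn (fun ε u => (ρe ε u - ρK u) / ε)
      (fun u => g u / φ' (ρK u)) (𝓝[≠] (0:ℝ)) (usphere n) := by
  rcases hmono with hm | hm
  · exact helper_mono n φ φ' hφdiff hφ'cont hφ'ne hm ρK g hρK hρKpos hg δ hδ ρe hρe
  · have h := helper_mono n (fun x => -φ x) (fun x => -φ' x)
      (fun t ht => (hφdiff t ht).neg) hφ'cont.neg
      (fun t ht => neg_ne_zero.mpr (hφ'ne t ht)) hm.neg
      ρK (fun u => -g u) hρK hρKpos hg.neg δ hδ ρe
      (fun ε hε u hu => ⟨(hρe ε hε u hu).1, by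
        have := (hρe ε hε u hu).2; linarith⟩)
    convert h using 2 with u
    rw [neg_div_neg_eq]
end
end

section
/- Let G be continuous on (0,∞)×S^{n-1} with values in ℝ, and assume the partial derivative G_t(t,u) = ∂G(t,u)/∂t exists and is continuous on (0,∞)×S^{n-1}. Let φ:(0,∞)→ℝ be continuously differentiable, strictly monotonic, with nowhere-zero derivative, inf φ = a ∈ ℝ∪{-∞}, sup φ = ∞. Let ρ_K ∈ C(S^{n-1}) be strictly positive, g ∈ C(S^{n-1}), and set ρ_ε(u) = φ^{-1}(φ(ρ_K(u)) + ε g(u)). Then lim_{ε→0} (1/ε)(∫_{S^{n-1}} G(ρ_ε(u),u) du − ∫_{S^{n-1}} G(ρ_K(u),u) du) = ∫_{S^{n-1}} g(u) G_t(ρ_K(u),u)/φ'(ρ_K(u)) du. -/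
open MeasureTheory Metric Set Filter
open scoped RealInnerProductSpace NNReal ENNReal Topology

noncomputable section

-- cube in Euc m has finite μH[m]
lemma cube_finite (m : ℕ) : μH[(m:ℝ)] ({x : Euc m | ∀ i, |x i| ≤ 1}) < ⊤ := by
  have h := (PiLp.antilipschitzWith_ofLp 2 (fun _ : Fin m => ℝ)).le_hausdorffMeasure_image
    (d := (m:ℝ)) (by positivity) ({x : Euc m | ∀ i, |x i| ≤ 1})
  refine lt_of_le_of_lt h ?_
  have himg : (WithLp.ofLp (p := 2) (V := ∀ _ : Fin m, ℝ)) '' ({x : Euc m | ∀ i, |x i| ≤ 1})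
      ⊆ Metric.closedBall (0 : Fin m → ℝ) 1 := by
    rintro y ⟨x, hx, rfl⟩
    rw [Metric.mem_closedBall, dist_zero_right]
    exact pi_norm_le_iff_of_nonneg zero_le_one |>.2 fun i => by
      simpa [Real.norm_eq_abs] using hx i
  have hpi : (μH[(m:ℝ)] : Measure (Fin m → ℝ)) (Metric.closedBall 0 1) < ⊤ := by
    have : ((m:ℝ)) = ((Fintype.card (Fin m) : ℕ) : ℝ) := by simp
    rw [this, hausdorffMeasure_pi_real]
    exact (isCompact_closedBall _ _).measure_lt_top
  exact ENNReal.mul_lt_top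
    (ENNReal.rpow_lt_top_of_nonneg (by positivity) ENNReal.coe_ne_top)
    (lt_of_le_of_lt (measure_mono himg) hpi)

lemma face_isometry (m : ℕ) (i : Fin (m+1)) (σ : ℝ) :
    Isometry (fun y : Euc m => (show Euc (m+1) from WithLp.toLp 2 (i.insertNth σ y.ofLp))) := by
  apply Isometry.of_dist_eq
  intro y y'
  rw [EuclideanSpace.dist_eq, EuclideanSpace.dist_eq]
  congr 1
  rw [Fin.sum_univ_succAbove _ i]
  simp

lemma coord_le_norm {n : ℕ} (x : Euc n) (i : Fin n) : |x i| ≤ ‖x‖ := by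
  rw [EuclideanSpace.norm_eq]
  rw [← Real.sqrt_sq_eq_abs]
  apply Real.sqrt_le_sqrt
  have : x i ^ 2 = ‖x i‖ ^ 2 := by rw [Real.norm_eq_abs, sq_abs]
  rw [this]
  exact Finset.single_le_sum (f := fun j => ‖x j‖ ^ 2) (fun j _ => by positivity) (Finset.mem_univ i)

lemma radial_lipschitz (n : ℕ) :
    LipschitzOnWith 2 (fun x : Euc n => ‖x‖⁻¹ • x) {x : Euc n | 1 ≤ ‖x‖} := by
  rw [lipschitzOnWith_iff_dist_le_mul]
  intro x hx y hy
  simp only [mem_setOf_eq] at hx hy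
  have hx0 : (0:ℝ) < ‖x‖ := lt_of_lt_of_le one_pos hx
  have hy0 : (0:ℝ) < ‖y‖ := lt_of_lt_of_le one_pos hy
  rw [dist_eq_norm, dist_eq_norm]
  have key : ‖x‖⁻¹ • x - ‖y‖⁻¹ • y = ‖x‖⁻¹ • (x - y) + (‖x‖⁻¹ - ‖y‖⁻¹) • y := by
    rw [smul_sub, sub_smul]; abel
  rw [key]
  have h1 : ‖‖x‖⁻¹ • (x - y)‖ ≤ ‖x - y‖ := by
    rw [norm_smul, norm_inv, norm_norm]
    calc ‖x‖⁻¹ * ‖x - y‖ ≤ 1 * ‖x - y‖ := by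
          apply mul_le_mul_of_nonneg_right _ (norm_nonneg _)
          exact inv_le_one_of_one_le₀ hx
      _ = ‖x - y‖ := one_mul _
  have h2 : ‖(‖x‖⁻¹ - ‖y‖⁻¹) • y‖ ≤ ‖x - y‖ := by
    rw [norm_smul, Real.norm_eq_abs]
    have heq : ‖x‖⁻¹ - ‖y‖⁻¹ = (‖y‖ - ‖x‖) / (‖x‖ * ‖y‖) := by
      field_simp
    rw [heq, abs_div, abs_of_pos (mul_pos hx0 hy0), div_mul_eq_mul_div,
      div_le_iff₀ (mul_pos hx0 hy0)]
    calc |‖y‖ - ‖x‖| * ‖y‖ ≤ ‖x - y‖ * ‖y‖ := by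
          apply mul_le_mul_of_nonneg_right _ (norm_nonneg _)
          calc |‖y‖ - ‖x‖| = |‖x‖ - ‖y‖| := abs_sub_comm _ _
            _ ≤ ‖x - y‖ := abs_norm_sub_norm_le x y
      _ ≤ ‖x - y‖ * (‖x‖ * ‖y‖) := by
          apply mul_le_mul_of_nonneg_left _ (norm_nonneg _)
          nlinarith
  calc ‖‖x‖⁻¹ • (x - y) + (‖x‖⁻¹ - ‖y‖⁻¹) • y‖
      ≤ ‖‖x‖⁻¹ • (x - y)‖ + ‖(‖x‖⁻¹ - ‖y‖⁻¹) • y‖ := norm_add_le _ _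
    _ ≤ ‖x - y‖ + ‖x - y‖ := add_le_add h1 h2
    _ = (2:ℝ≥0) * ‖x - y‖ := by push_cast; ring

lemma sphere_hmeas_finite (n : ℕ) : μH[(n:ℝ)-1] (Metric.sphere (0:Euc n) 1) < ⊤ := by
  cases n with
  | zero =>
      have he : (Metric.sphere (0:Euc 0) 1) = (∅ : Set (Euc 0)) := by
        ext x
        simp only [Metric.mem_sphere, mem_empty_iff_false, iff_false]
        have hx : x = 0 := Subsingleton.elim x 0
        rw [hx]
        simp
      rw [he, measure_empty]
      exact ENNReal.zero_lt_top
  | succ m =>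
      have hcast : (((m+1:ℕ)):ℝ) - 1 = (m:ℝ) := by push_cast; ring
      rw [hcast]
      set C : Set (Euc m) := {y : Euc m | ∀ k, |y k| ≤ 1} with hC
      have hface : ∀ (i : Fin (m+1)) (σ : ℝ), |σ| = 1 →
          (fun y : Euc m => (show Euc (m+1) from WithLp.toLp 2 (i.insertNth σ y.ofLp))) '' C
            ⊆ {z : Euc (m+1) | 1 ≤ ‖z‖} := by
        rintro i σ hσ _ ⟨y, hy, rfl⟩
        have h1 : |(show Euc (m+1) from WithLp.toLp 2 (i.insertNth σ y.ofLp)) i| = 1 := by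
          have h2 : (show Euc (m+1) from WithLp.toLp 2 (i.insertNth σ y.ofLp)) i = σ :=
            Fin.insertNth_apply_same (α := fun _ => ℝ) i σ y.ofLp
          rw [h2, hσ]
        calc (1:ℝ) = |(show Euc (m+1) from WithLp.toLp 2 (i.insertNth σ y.ofLp)) i| := h1.symm
          _ ≤ ‖(show Euc (m+1) from WithLp.toLp 2 (i.insertNth σ y.ofLp))‖ := coord_le_norm _ _
      have hcover : Metric.sphere (0:Euc (m+1)) 1 ⊆
          ⋃ (p : Fin (m+1) × Bool), (fun x : Euc (m+1) => ‖x‖⁻¹ • x) ''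
            ((fun y : Euc m =>
              (show Euc (m+1) from WithLp.toLp 2 (p.1.insertNth (if p.2 then (1:ℝ) else -1) y.ofLp))) '' C) := by
        intro x hx
        have hxn : ‖x‖ = 1 := by simpa using hx
        obtain ⟨i, _, hi⟩ := Finset.exists_max_image Finset.univ (fun j => |x j|)
          Finset.univ_nonempty
        have ha : 0 < |x i| := by
          rcases lt_or_eq_of_le (abs_nonneg (x i)) with h | h
          · exact h
          · exfalso
            have hx0 : x = 0 := by
              ext j
              exact abs_nonpos_iff.mp ((hi j (Finset.mem_univ j)).trans h.ge)
            rw [hx0, norm_zero] at hxn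
            norm_num at hxn
        set b : Bool := decide ((0:ℝ) ≤ x i) with hb
        refine mem_iUnion.2 ⟨(i, b), ?_⟩
        set y : Euc (m+1) := (|x i|)⁻¹ • x with hy
        have hyapp : ∀ j, y j = (|x i|)⁻¹ * x j := fun j => rfl
        have hxi0 : x i ≠ 0 := fun h0 => by simp [h0] at ha
        have hyi : y i = (if b then (1:ℝ) else -1) := by
          by_cases h : (0:ℝ) ≤ x i
          · have hb' : b = true := decide_eq_true h
            rw [hb']
            simp only [if_true]
            rw [hyapp i, abs_of_nonneg h, inv_mul_cancel₀ hxi0]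
          · have hb' : b = false := decide_eq_false h
            push_neg at h
            rw [hb']
            simp only [Bool.false_eq_true, if_false]
            rw [hyapp i, abs_of_neg h, inv_neg, neg_mul, inv_mul_cancel₀ hxi0]
        refine ⟨y, ⟨WithLp.toLp 2 (Fin.removeNth i y.ofLp), ?_, ?_⟩, ?_⟩
        · intro k
          change |(Fin.removeNth i y.ofLp) k| ≤ 1
          rw [show (Fin.removeNth i y.ofLp) k = y (i.succAbove k) from rfl, hyapp]
          rw [abs_mul, abs_inv, abs_abs]
          rw [inv_mul_le_iff₀ ha, mul_one]
          exact hi _ (Finset.mem_univ _)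
        · rw [← hyi]
          exact congrArg (WithLp.toLp 2) (Fin.insertNth_self_removeNth i y.ofLp)
        · have hny : ‖y‖ = (|x i|)⁻¹ := by
            rw [hy, norm_smul, hxn, norm_inv, Real.norm_eq_abs, abs_abs, mul_one]
          show ‖y‖⁻¹ • y = x
          rw [hny, inv_inv, hy, smul_smul, mul_inv_cancel₀ (ne_of_gt ha), one_smul]
      refine lt_of_le_of_lt (measure_mono hcover) ?_
      refine lt_of_le_of_lt (measure_iUnion_le _) ?_
      rw [tsum_fintype]
      refine ENNReal.sum_lt_top.2 fun p _ => ?_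
      have hσ : |(if p.2 then (1:ℝ) else -1)| = 1 := by
        by_cases h : p.2 <;> simp [h]
      have hlip : LipschitzOnWith 2 (fun x : Euc (m+1) => ‖x‖⁻¹ • x)
          ((fun y : Euc m =>
            (show Euc (m+1) from WithLp.toLp 2 (p.1.insertNth (if p.2 then (1:ℝ) else -1) y.ofLp))) '' C) :=
        (radial_lipschitz (m+1)).mono (hface p.1 _ hσ)
      refine lt_of_le_of_lt (hlip.hausdorffMeasure_image_le (by positivity)) ?_
      rw [(face_isometry m p.1 (if p.2 then (1:ℝ) else -1)).hausdorffMeasure_image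
        (Or.inl (by positivity)) C]
      exact ENNReal.mul_lt_top
        (ENNReal.rpow_lt_top_of_nonneg (by positivity) ENNReal.coe_ne_top)
        (cube_finite m)

instance smeas_finite (n : ℕ) :
    IsFiniteMeasure ((μH[(n:ℝ)-1]).restrict (Metric.sphere (0:Euc n) 1)) := by
  constructor
  rw [Measure.restrict_apply_univ]
  exact sphere_hmeas_finite n

lemma tendsto_slope_shift {A : ℝ → ℝ} {B c : ℝ} (h : HasDerivAt A c 0) (h0 : A 0 = B) :
    Tendsto (fun ε => (A ε - B) / ε) (𝓝[≠] (0:ℝ)) (𝓝 c) := by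
  have hf := hasDerivAt_iff_tendsto_slope.1 h
  apply hf.congr
  intro ε
  rw [slope_def_field, h0, sub_zero]

theorem stmt2 (n : ℕ) (a : EReal) (G Gt : ℝ → Euc n → ℝ)
    (hG : ContinuousOn (fun p : ℝ × Euc n => G p.1 p.2) (Ioi 0 ×ˢ usphere n))
    (hGt : ContinuousOn (fun p : ℝ × Euc n => Gt p.1 p.2) (Ioi 0 ×ˢ usphere n))
    (hGtderiv : ∀ t ∈ Ioi (0:ℝ), ∀ u ∈ usphere n,
      HasDerivAt (fun s => G s u) (Gt t u) t)
    (φ φ' : ℝ → ℝ)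
    (hφdiff : ∀ t ∈ Ioi (0:ℝ), HasDerivAt φ (φ' t) t)
    (hφ'cont : ContinuousOn φ' (Ioi 0))
    (hφ'ne : ∀ t ∈ Ioi (0:ℝ), φ' t ≠ 0)
    (hmono : StrictMonoOn φ (Ioi 0) ∨ StrictAntiOn φ (Ioi 0))
    (hinf : ⨅ t : {t : ℝ // 0 < t}, (φ t.1 : EReal) = a)
    (hsup : ⨆ t : {t : ℝ // 0 < t}, (φ t.1 : EReal) = ⊤)
    (ρK g : Euc n → ℝ)
    (hρK : ContinuousOn ρK (usphere n)) (hρKpos : ∀ u ∈ usphere n, 0 < ρK u)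
    (hg : ContinuousOn g (usphere n))
    (δ : ℝ) (hδ : 0 < δ) (ρe : ℝ → Euc n → ℝ)
    (hρe : ∀ ε ∈ Ioo (-δ) δ, ∀ u ∈ usphere n,
      0 < ρe ε u ∧ φ (ρe ε u) = φ (ρK u) + ε * g u)
    (hρe0 : ∀ u ∈ usphere n, ρe 0 u = ρK u) :
    Tendsto (fun ε => ((∫ u, G (ρe ε u) u ∂smeas n) - ∫ u, G (ρK u) u ∂smeas n) / ε)
      (𝓝[≠] (0:ℝ))
      (𝓝 (∫ u, g u * Gt (ρK u) u / φ' (ρK u) ∂smeas n)) := by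
  classical
  have hSmeas : MeasurableSet (usphere n) := Metric.isClosed_sphere.measurableSet
  haveI : IsFiniteMeasure (smeas n) := smeas_finite n
  rcases eq_empty_or_nonempty (usphere n) with hS | hSne
  · have hz : smeas n = 0 := by
      rw [smeas, hS, Measure.restrict_empty]
    have he : (fun ε : ℝ => ((∫ u, G (ρe ε u) u ∂smeas n)
        - ∫ u, G (ρK u) u ∂smeas n) / ε) = fun _ => (0:ℝ) := by
      funext ε; rw [hz]; simp
    rw [he, hz]
    simp only [integral_zero_measure]
    exact tendsto_const_nhds
  have hScomp : IsCompact (usphere n) := isCompact_sphere 0 1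
  have hφc : ContinuousOn φ (Ioi 0) :=
    fun t ht => (hφdiff t ht).continuousAt.continuousWithinAt
  have hinj : InjOn φ (Ioi 0) := by
    rcases hmono with hm | hm
    · exact hm.injOn
    · exact hm.injOn
  set δ' := δ/2 with hδ'def
  have hδ' : 0 < δ' := half_pos hδ
  have hIccIoo : Icc (-δ') δ' ⊆ Ioo (-δ) δ := by
    intro x hx
    constructor
    · have := hx.1; simp only [hδ'def] at this ⊢; linarith
    · have := hx.2; simp only [hδ'def] at this ⊢; linarith
  set S := usphere n with hSdef
  set K₀ : Set (ℝ × Euc n) := Icc (-δ') δ' ×ˢ S with hK₀def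
  have hK₀comp : IsCompact K₀ := isCompact_Icc.prod hScomp
  have hK₀ne : K₀.Nonempty := by
    obtain ⟨u₀, hu₀⟩ := hSne
    exact ⟨(0, u₀), ⟨by constructor <;> simp [le_of_lt hδ'], hu₀⟩⟩
  set h : ℝ × Euc n → ℝ := fun p => φ (ρK p.2) + p.1 * g p.2 with hhdef
  have hφρK : ContinuousOn (fun u => φ (ρK u)) S :=
    hφc.comp hρK (fun u hu => hρKpos u hu)
  have hhcont : ContinuousOn h K₀ := by
    apply ContinuousOn.add
    · exact hφρK.comp continuous_snd.continuousOn (fun p hp => hp.2)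
    · exact (continuous_fst.continuousOn).mul
        (hg.comp continuous_snd.continuousOn (fun p hp => hp.2))
  have hval : ∀ p ∈ K₀, 0 < ρe p.1 p.2 ∧ φ (ρe p.1 p.2) = h p :=
    fun p hp => hρe p.1 (hIccIoo hp.1) p.2 hp.2
  obtain ⟨p₁, hp₁K, hp₁min⟩ := hK₀comp.exists_isMinOn hK₀ne hhcont
  obtain ⟨p₂, hp₂K, hp₂max⟩ := hK₀comp.exists_isMaxOn hK₀ne hhcont
  set t₁ := ρe p₁.1 p₁.2 with ht₁def
  set t₂ := ρe p₂.1 p₂.2 with ht₂def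
  have ht₁pos : 0 < t₁ := (hval p₁ hp₁K).1
  have ht₂pos : 0 < t₂ := (hval p₂ hp₂K).1
  set m₁ := min t₁ t₂ with hm₁def
  set M₁ := max t₁ t₂ with hM₁def
  have hbdd : ∀ p ∈ K₀, ρe p.1 p.2 ∈ Icc m₁ M₁ := by
    intro p hp
    have hle1 : φ t₁ ≤ φ (ρe p.1 p.2) := by
      rw [(hval p₁ hp₁K).2, (hval p hp).2]
      exact hp₁min hp
    have hle2 : φ (ρe p.1 p.2) ≤ φ t₂ := by
      rw [(hval p₂ hp₂K).2, (hval p hp).2]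
      exact hp₂max hp
    have hρp : 0 < ρe p.1 p.2 := (hval p hp).1
    rcases hmono with hm | hm
    · exact ⟨le_trans (min_le_left _ _)
        ((hm.le_iff_le (mem_Ioi.2 ht₁pos) (mem_Ioi.2 hρp)).1 hle1),
        le_trans ((hm.le_iff_le (mem_Ioi.2 hρp) (mem_Ioi.2 ht₂pos)).1 hle2)
          (le_max_right _ _)⟩
    · exact ⟨le_trans (min_le_right _ _)
        ((hm.le_iff_ge (mem_Ioi.2 hρp) (mem_Ioi.2 ht₂pos)).1 hle2),
        le_trans ((hm.le_iff_ge (mem_Ioi.2 ht₁pos) (mem_Ioi.2 hρp)).1 hle1)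
          (le_max_left _ _)⟩
  set D : Set (ℝ × Euc n) := Ioo (-δ') δ' ×ˢ S with hDdef
  have hDK₀ : D ⊆ K₀ := fun p hp => ⟨Ioo_subset_Icc_self hp.1, hp.2⟩
  -- continuity of (ε, u) ↦ ρe ε u on D
  have hρcont : ContinuousOn (fun p : ℝ × Euc n => ρe p.1 p.2) D := by
    intro p₀ hp₀
    have hp₀K : p₀ ∈ K₀ := hDK₀ hp₀
    have ht₀pos : 0 < ρe p₀.1 p₀.2 := (hval p₀ hp₀K).1
    have hhp₀ : φ (ρe p₀.1 p₀.2) = h p₀ := (hval p₀ hp₀K).2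
    have hhtt : Tendsto h (𝓝[D] p₀) (𝓝 (h p₀)) := (hhcont.mono hDK₀) p₀ hp₀
    have hev : ∀ᶠ p in 𝓝[D] p₀, p ∈ D := eventually_mem_nhdsWithin
    rw [ContinuousWithinAt]
    apply tendsto_order.2
    constructor
    · intro b hb
      rcases le_or_gt b 0 with hb0 | hb0
      · filter_upwards [hev] with p hp
        exact lt_of_le_of_lt hb0 (hval p (hDK₀ hp)).1
      · rcases hmono with hm | hm
        · have hlt : φ b < φ (ρe p₀.1 p₀.2) :=
            hm (mem_Ioi.2 hb0) (mem_Ioi.2 ht₀pos) hb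
          rw [hhp₀] at hlt
          filter_upwards [hhtt (Ioi_mem_nhds hlt), hev] with p hpφ hpD
          have hφlt : φ b < φ (ρe p.1 p.2) := by
            rw [(hval p (hDK₀ hpD)).2]; exact hpφ
          exact (hm.lt_iff_lt (mem_Ioi.2 hb0)
            (mem_Ioi.2 (hval p (hDK₀ hpD)).1)).1 hφlt
        · have hlt : φ (ρe p₀.1 p₀.2) < φ b :=
            hm (mem_Ioi.2 hb0) (mem_Ioi.2 ht₀pos) hb
          rw [hhp₀] at hlt
          filter_upwards [hhtt (Iio_mem_nhds hlt), hev] with p hpφ hpD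
          have hφlt : φ (ρe p.1 p.2) < φ b := by
            rw [(hval p (hDK₀ hpD)).2]; exact hpφ
          exact (hm.lt_iff_gt (mem_Ioi.2 (hval p (hDK₀ hpD)).1)
            (mem_Ioi.2 hb0)).1 hφlt
    · intro b hb
      have hb0 : 0 < b := lt_trans ht₀pos hb
      rcases hmono with hm | hm
      · have hlt : φ (ρe p₀.1 p₀.2) < φ b :=
          hm (mem_Ioi.2 ht₀pos) (mem_Ioi.2 hb0) hb
        rw [hhp₀] at hlt
        filter_upwards [hhtt (Iio_mem_nhds hlt), hev] with p hpφ hpD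
        have hφlt : φ (ρe p.1 p.2) < φ b := by
          rw [(hval p (hDK₀ hpD)).2]; exact hpφ
        exact (hm.lt_iff_lt (mem_Ioi.2 (hval p (hDK₀ hpD)).1) (mem_Ioi.2 hb0)).1 hφlt
      · have hlt : φ b < φ (ρe p₀.1 p₀.2) :=
          hm (mem_Ioi.2 ht₀pos) (mem_Ioi.2 hb0) hb
        rw [hhp₀] at hlt
        filter_upwards [hhtt (Ioi_mem_nhds hlt), hev] with p hpφ hpD
        have hφlt : φ b < φ (ρe p.1 p.2) := by
          rw [(hval p (hDK₀ hpD)).2]; exact hpφ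
        exact (hm.lt_iff_gt (mem_Ioi.2 hb0) (mem_Ioi.2 (hval p (hDK₀ hpD)).1)).1 hφlt
  have hsub2 : Ioo (-δ') δ' ⊆ Ioo (-δ) δ := fun x hx => hIccIoo (Ioo_subset_Icc_self hx)
  -- derivative of ε ↦ ρe ε u
  have hderiv : ∀ u ∈ S, ∀ ε₀ ∈ Ioo (-δ') δ',
      HasDerivAt (fun ε => ρe ε u) (g u / φ' (ρe ε₀ u)) ε₀ := by
    intro u hu ε₀ hε₀
    have hmemD : (ε₀, u) ∈ D := ⟨hε₀, hu⟩
    have ht₀pos : 0 < ρe ε₀ u := (hval _ (hDK₀ hmemD)).1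
    have hctA : ContinuousAt (fun ε => ρe ε u) ε₀ := by
      have hmap : MapsTo (fun ε : ℝ => (ε, u)) (Ioo (-δ') δ') D :=
        fun ε hε => ⟨hε, hu⟩
      have h1 : ContinuousWithinAt (fun ε => ρe ε u) (Ioo (-δ') δ') ε₀ :=
        ContinuousWithinAt.comp (f := fun ε : ℝ => (ε, u))
          (g := fun p : ℝ × Euc n => ρe p.1 p.2)
          (hρcont (ε₀, u) hmemD)
          ((continuous_id.prodMk continuous_const).continuousWithinAt) hmap
      exact h1.continuousAt (Ioo_mem_nhds hε₀.1 hε₀.2)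
    by_cases hgu : g u = 0
    · have hconst : (fun ε => ρe ε u) =ᶠ[𝓝 ε₀] (fun _ => ρe ε₀ u) := by
        filter_upwards [Ioo_mem_nhds (hsub2 hε₀).1 (hsub2 hε₀).2] with ε hε
        apply hinj (mem_Ioi.2 (hρe ε hε u hu).1) (mem_Ioi.2 ht₀pos)
        rw [(hρe ε hε u hu).2, (hρe ε₀ (hsub2 hε₀) u hu).2, hgu]
        ring
      rw [hgu, zero_div]
      exact (hasDerivAt_const ε₀ (ρe ε₀ u)).congr_of_eventuallyEq hconst
    · set F : ℝ → ℝ := fun t => (φ t - φ (ρK u)) / g u with hFdef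
      have hF : HasDerivAt F (φ' (ρe ε₀ u) / g u) (ρe ε₀ u) :=
        ((hφdiff _ ht₀pos).sub_const _).div_const _
      have hne : φ' (ρe ε₀ u) / g u ≠ 0 := div_ne_zero (hφ'ne _ ht₀pos) hgu
      have hfg : ∀ᶠ ε in 𝓝 ε₀, F (ρe ε u) = ε := by
        filter_upwards [Ioo_mem_nhds (hsub2 hε₀).1 (hsub2 hε₀).2] with ε hε
        rw [hFdef]
        simp only
        rw [(hρe ε hε u hu).2]
        field_simp
        ring
      have := HasDerivAt.of_local_left_inverse hctA hF hne hfg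
      rwa [inv_div] at this
  -- derivative of the integrand
  have hFFderiv : ∀ u ∈ S, ∀ ε₀ ∈ Ioo (-δ') δ',
      HasDerivAt (fun ε => G (ρe ε u) u)
        (Gt (ρe ε₀ u) u * (g u / φ' (ρe ε₀ u))) ε₀ := by
    intro u hu ε₀ hε₀
    have hmemD' : (ε₀, u) ∈ D := ⟨hε₀, hu⟩
    have ht₀pos : 0 < ρe ε₀ u := (hval (ε₀, u) (hDK₀ hmemD')).1
    have hc := (hGtderiv _ ht₀pos u hu).comp ε₀ (hderiv u hu ε₀ hε₀)
    exact hc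
  -- continuity of the formal derivative on D
  have hρpos' : ∀ p ∈ D, 0 < ρe p.1 p.2 := fun p hp => (hval p (hDK₀ hp)).1
  have hpair : ContinuousOn (fun p : ℝ × Euc n => (ρe p.1 p.2, p.2)) D :=
    hρcont.prodMk continuous_snd.continuousOn
  have hGtcomp : ContinuousOn (fun p : ℝ × Euc n => Gt (ρe p.1 p.2) p.2) D :=
    hGt.comp hpair (fun p hp => ⟨hρpos' p hp, hp.2⟩)
  have hφ'comp : ContinuousOn (fun p : ℝ × Euc n => φ' (ρe p.1 p.2)) D :=
    hφ'cont.comp hρcont (fun p hp => hρpos' p hp)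
  have hgcomp : ContinuousOn (fun p : ℝ × Euc n => g p.2) D :=
    hg.comp continuous_snd.continuousOn (fun p hp => hp.2)
  have hFF'cont : ContinuousOn
      (fun p : ℝ × Euc n => Gt (ρe p.1 p.2) p.2 * (g p.2 / φ' (ρe p.1 p.2))) D :=
    hGtcomp.mul (hgcomp.div hφ'comp (fun p hp => hφ'ne _ (hρpos' p hp)))
  -- uniform bound on a compact subinterval
  set r := δ'/2 with hrdef
  have hr : 0 < r := half_pos hδ'
  have hrδ' : r < δ' := half_lt_self hδ'
  have hKr : Icc (-r) r ×ˢ S ⊆ D := by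
    rintro p ⟨hp1, hp2⟩
    exact ⟨⟨lt_of_lt_of_le (by linarith) hp1.1, lt_of_le_of_lt hp1.2 (by linarith)⟩, hp2⟩
  obtain ⟨C, hC⟩ := (isCompact_Icc.prod hScomp).exists_bound_of_continuousOn
    (hFF'cont.mono hKr)
  have hballIoo : Metric.ball (0:ℝ) r ⊆ Ioo (-δ') δ' := by
    intro x hx
    rw [Metric.mem_ball, Real.dist_eq, sub_zero] at hx
    rcases abs_lt.1 hx with ⟨h1, h2⟩
    exact ⟨by linarith, by linarith⟩
  have hballIcc : Metric.ball (0:ℝ) r ⊆ Icc (-r) r := by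
    intro x hx
    rw [Metric.mem_ball, Real.dist_eq, sub_zero] at hx
    rcases abs_lt.1 hx with ⟨h1, h2⟩
    exact ⟨by linarith, by linarith⟩
  have h0mem : (0:ℝ) ∈ Ioo (-δ') δ' := ⟨by linarith, hδ'⟩
  -- continuity in u for fixed ε
  have hFFcontu : ∀ ε ∈ Ioo (-δ') δ', ContinuousOn (fun u => G (ρe ε u) u) S := by
    intro ε hε
    have h1 : ContinuousOn (fun u => ρe ε u) S :=
      ContinuousOn.comp (g := fun p : ℝ × Euc n => ρe p.1 p.2)
        (f := fun u : Euc n => (ε, u)) hρcont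
        ((continuous_const.prodMk continuous_id).continuousOn)
        (fun u hu => ⟨hε, hu⟩)
    exact hG.comp (h1.prodMk continuousOn_id)
      (fun u hu => ⟨(hval (ε, u) (hDK₀ (⟨hε, hu⟩ : (ε, u) ∈ D))).1, hu⟩)
  have hFF'contu : ContinuousOn
      (fun u => Gt (ρe 0 u) u * (g u / φ' (ρe 0 u))) S :=
    ContinuousOn.comp
      (g := fun p : ℝ × Euc n => Gt (ρe p.1 p.2) p.2 * (g p.2 / φ' (ρe p.1 p.2)))
      (f := fun u : Euc n => ((0:ℝ), u)) hFF'cont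
      ((continuous_const.prodMk continuous_id).continuousOn)
      (fun u hu => ⟨h0mem, hu⟩)
  -- the measure
  set μ : Measure (Euc n) := smeas n with hμdef
  have hμ : μ = (μH[(n:ℝ)-1]).restrict S := rfl
  obtain ⟨C₀, hC₀⟩ := hScomp.exists_bound_of_continuousOn (hFFcontu 0 h0mem)
  have key := hasDerivAt_integral_of_dominated_loc_of_deriv_le (μ := μ) (x₀ := (0:ℝ))
    (F := fun ε u => G (ρe ε u) u)
    (F' := fun ε u => Gt (ρe ε u) u * (g u / φ' (ρe ε u)))
    (bound := fun _ => C) (Metric.ball_mem_nhds 0 hr)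
    (by
      filter_upwards [Ioo_mem_nhds h0mem.1 h0mem.2] with ε hε
      rw [hμ]
      exact (hFFcontu ε hε).aestronglyMeasurable hSmeas)
    (by
      refine Integrable.mono' (integrable_const C₀)
        (by rw [hμ]; exact (hFFcontu 0 h0mem).aestronglyMeasurable hSmeas) ?_
      rw [hμ]
      exact ae_restrict_of_forall_mem hSmeas (fun u hu => hC₀ u hu))
    (by
      rw [hμ]
      exact hFF'contu.aestronglyMeasurable hSmeas)
    (by
      rw [hμ]
      refine ae_restrict_of_forall_mem hSmeas (fun u hu => ?_)
      intro ε hε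
      exact hC (ε, u) ⟨hballIcc hε, hu⟩)
    (integrable_const C)
    (by
      rw [hμ]
      refine ae_restrict_of_forall_mem hSmeas (fun u hu => ?_)
      intro ε hε
      exact hFFderiv u hu ε (hballIoo hε))
  obtain ⟨-, hkey⟩ := key
  have hint0 : (∫ u, G (ρe 0 u) u ∂μ) = ∫ u, G (ρK u) u ∂μ := by
    rw [hμ]
    exact setIntegral_congr_fun hSmeas (fun u hu => by rw [hρe0 u hu])
  have hintF' : (∫ u, Gt (ρe 0 u) u * (g u / φ' (ρe 0 u)) ∂μ)
      = ∫ u, g u * Gt (ρK u) u / φ' (ρK u) ∂μ := by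
    rw [hμ]
    exact setIntegral_congr_fun hSmeas (fun u hu => by rw [hρe0 u hu]; ring)
  rw [hintF'] at hkey
  exact tendsto_slope_shift (A := fun ε => ∫ u, G (ρe ε u) u ∂μ) hkey hint0
end
end

section
/- Let G and G_t = ∂G/∂t be continuous on (0,∞)×S^{n-1}, let φ_1, φ_2 : (0,∞)→(0,∞) be continuous, strictly increasing with φ_i(1)=1, φ_i(0+)=0, φ_i(∞)=∞, and suppose the left derivative (φ_1)'_l(1) exists and is positive. Let ρ_K, ρ_L ∈ C(S^{n-1}) be strictly positive, and for ε>0 let ρ_ε(u) be the unique positive solution of φ_1(ρ_K(u)/ρ_ε(u)) + ε φ_2(ρ_L(u)/ρ_ε(u)) = 1. Then lim_{ε→0+} (1/ε)(∫ G(ρ_ε(u),u) du − ∫ G(ρ_K(u),u) du) = (1/(φ_1)'_l(1)) ∫_{S^{n-1}} φ_2(ρ_L(u)/ρ_K(u)) ρ_K(u) G_t(ρ_K(u),u) du. -/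
open MeasureTheory Metric Set Filter
open scoped RealInnerProductSpace NNReal ENNReal Topology

noncomputable section

lemma normalize_lipschitz {E : Type*} [NormedAddCommGroup E] [NormedSpace ℝ E] :
    LipschitzOnWith 2 (fun x : E => ‖x‖⁻¹ • x) {x | 1 ≤ ‖x‖} := by
  rw [lipschitzOnWith_iff_dist_le_mul]
  have key : ∀ x ∈ {x : E | 1 ≤ ‖x‖}, ∀ y ∈ {x : E | 1 ≤ ‖x‖}, ‖y‖ ≤ ‖x‖ →
      dist (‖x‖⁻¹ • x) (‖y‖⁻¹ • y) ≤ 2 * dist x y := by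
    intro x hx y hy hxy
    simp only [mem_setOf_eq] at hx hy
    have hx0 : (0:ℝ) < ‖x‖ := lt_of_lt_of_le one_pos hx
    have hy0 : (0:ℝ) < ‖y‖ := lt_of_lt_of_le one_pos hy
    rw [dist_eq_norm]
    have e1 : ‖x‖⁻¹ • x - ‖y‖⁻¹ • y = ‖x‖⁻¹ • (x - y) + (‖x‖⁻¹ - ‖y‖⁻¹) • y := by
      rw [smul_sub, sub_smul]; abel
    rw [e1]
    have h2 : ‖(‖x‖⁻¹ - ‖y‖⁻¹) • y‖ ≤ ‖x - y‖ := by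
      rw [norm_smul, Real.norm_eq_abs]
      have : |‖x‖⁻¹ - ‖y‖⁻¹| = (‖x‖ - ‖y‖) / (‖x‖ * ‖y‖) := by
        rw [abs_of_nonpos (by
          have := inv_anti₀ hy0 hxy
          linarith)]
        field_simp
        ring
      rw [this]
      have hnn : ‖x‖ - ‖y‖ ≤ ‖x - y‖ := by
        have := norm_sub_norm_le x y
        linarith [le_abs_self (‖x‖ - ‖y‖)]
      calc (‖x‖ - ‖y‖) / (‖x‖ * ‖y‖) * ‖y‖ = (‖x‖ - ‖y‖) / ‖x‖ := by
            field_simp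
        _ ≤ (‖x‖ - ‖y‖) := div_le_self (by linarith) hx
        _ ≤ ‖x - y‖ := hnn
    have h1 : ‖‖x‖⁻¹ • (x - y)‖ ≤ ‖x - y‖ := by
      rw [norm_smul, Real.norm_eq_abs, abs_of_pos (inv_pos.2 hx0)]
      calc ‖x‖⁻¹ * ‖x - y‖ ≤ 1 * ‖x - y‖ := by
            apply mul_le_mul_of_nonneg_right _ (norm_nonneg _)
            rw [inv_le_one_iff₀]; right; exact hx
        _ = ‖x - y‖ := one_mul _
    calc ‖‖x‖⁻¹ • (x - y) + (‖x‖⁻¹ - ‖y‖⁻¹) • y‖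
        ≤ ‖‖x‖⁻¹ • (x - y)‖ + ‖(‖x‖⁻¹ - ‖y‖⁻¹) • y‖ := norm_add_le _ _
      _ ≤ ‖x - y‖ + ‖x - y‖ := add_le_add h1 h2
      _ = 2 * dist x y := by rw [dist_eq_norm]; ring
  intro x hx y hy
  rcases le_total ‖y‖ ‖x‖ with h | h
  · exact_mod_cast key x hx y hy h
  · rw [dist_comm, dist_comm x y]; exact_mod_cast key y hy x hx h

lemma sphere_fin (n : ℕ) : μH[(n:ℝ)-1] (usphere n) < ⊤ := by
  cases n with
  | zero =>
      have : usphere 0 = ∅ := by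
        ext x
        simp only [usphere, mem_sphere_iff_norm, sub_zero, mem_empty_iff_false, iff_false]
        have : x = 0 := Subsingleton.elim x 0
        simp [this]
      rw [this, measure_empty]
      exact ENNReal.zero_lt_top
  | succ m =>
    have hc : ((m+1:ℕ):ℝ) - 1 = (m:ℝ) := by push_cast; ring
    rw [hc]
    set box : Set (Fin m → ℝ) := Set.pi Set.univ (fun _ => Icc (-1:ℝ) 1) with hbox
    set g : Fin (m+1) × Bool → (Fin m → ℝ) → Euc (m+1) :=
      fun p y => (WithLp.equiv 2 (Fin (m+1) → ℝ)).symm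
        (p.1.insertNth (if p.2 then (1:ℝ) else -1) y) with hg
    set f : Euc (m+1) → Euc (m+1) := fun x => ‖x‖⁻¹ • x with hf
    set K : ℝ≥0 := ⟨Real.sqrt (m+1), Real.sqrt_nonneg _⟩ with hK
    -- g is Lipschitz
    have hglip : ∀ p, LipschitzWith K (g p) := by
      intro p
      rw [lipschitzWith_iff_dist_le_mul]
      intro y y'
      have hcoord : ∀ j : Fin (m+1), dist (g p y j) (g p y' j) ≤ dist y y' := by
        intro j
        rcases eq_or_ne j p.1 with rfl | hne
        · simp only [hg, WithLp.equiv_symm_apply, WithLp.ofLp_toLp, Fin.insertNth_apply_same]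
          simp [dist_nonneg]
        · obtain ⟨k, hk⟩ := Fin.exists_succAbove_eq hne
          subst hk
          simp only [hg, WithLp.equiv_symm_apply, WithLp.ofLp_toLp, Fin.insertNth_apply_succAbove]
          exact dist_le_pi_dist y y' k
      rw [EuclideanSpace.dist_eq]
      have : ∑ j, dist (g p y j) (g p y' j) ^ 2 ≤ (m+1) * dist y y' ^ 2 := by
        calc ∑ j, dist (g p y j) (g p y' j) ^ 2
            ≤ ∑ _j : Fin (m+1), dist y y' ^ 2 := by
              apply Finset.sum_le_sum
              intro j _
              exact pow_le_pow_left₀ dist_nonneg (hcoord j) 2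
          _ = (m+1) * dist y y' ^ 2 := by simp [Finset.sum_const]
      calc Real.sqrt (∑ j, dist (g p y j) (g p y' j) ^ 2)
          ≤ Real.sqrt ((m+1) * dist y y' ^ 2) := Real.sqrt_le_sqrt this
        _ = Real.sqrt (m+1) * dist y y' := by
            rw [Real.sqrt_mul (by positivity), Real.sqrt_sq dist_nonneg]
        _ = (K : ℝ) * dist y y' := rfl
    -- image of g is in the domain of the normalization
    have hgdom : ∀ p, ∀ y ∈ box, (1:ℝ) ≤ ‖g p y‖ := by
      intro p y _
      have h1 : |g p y p.1| ≤ ‖g p y‖ := by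
        have := EuclideanSpace.norm_eq (g p y)
        rw [this]
        rw [show |g p y p.1| = Real.sqrt (‖g p y p.1‖^2) by
          rw [Real.sqrt_sq_eq_abs, Real.norm_eq_abs, abs_abs]]
        apply Real.sqrt_le_sqrt
        exact Finset.single_le_sum (f := fun j => ‖g p y j‖^2)
          (fun j _ => by positivity) (Finset.mem_univ p.1)
      have h2 : |g p y p.1| = 1 := by
        simp only [hg, WithLp.equiv_symm_apply, WithLp.ofLp_toLp, Fin.insertNth_apply_same]
        cases p.2 <;> norm_num
      linarith
    -- covering
    have hcover : usphere (m+1) ⊆ ⋃ p, f '' (g p '' box) := by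
      intro u hu
      have hnorm : ‖u‖ = 1 := by
        simpa [usphere, mem_sphere_iff_norm] using hu
      obtain ⟨i, _, hi⟩ := Finset.exists_max_image Finset.univ (fun j => |u j|)
        ⟨0, Finset.mem_univ _⟩
      have hs : 0 < |u i| := by
        rcases lt_or_ge 0 (|u i|) with h | h
        · exact h
        · exfalso
          have : u = 0 := by
            ext j
            have := hi j (Finset.mem_univ j)
            have : |u j| = 0 := le_antisymm (by linarith [abs_nonneg (u j)]) (abs_nonneg _)
            simpa [abs_eq_zero] using this
          rw [this] at hnorm; simp at hnorm
      set s := |u i| with hsdef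
      set x : Euc (m+1) := s⁻¹ • u with hx
      have hxj : ∀ j, x j = s⁻¹ * u j := fun j => rfl
      have hxi : |x i| = 1 := by
        rw [hxj, abs_mul, abs_inv, abs_abs]
        field_simp
        exact div_self (ne_of_gt hs)
      have hb : x i = 1 ∨ x i = -1 := by
        rcases abs_eq (by norm_num : (0:ℝ) ≤ 1) |>.mp hxi with h | h
        · left; exact h
        · right; exact h
      set b : Bool := decide (x i = 1) with hbdef
      refine mem_iUnion.2 ⟨(i, b), ?_⟩
      have habs : ∀ j, |x j| ≤ 1 := by
        intro j
        have : |x j| = |u j| / s := by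
          rw [hxj, abs_mul, abs_inv, abs_abs]; ring
        rw [this, div_le_one hs]
        exact hi _ (Finset.mem_univ _)
      refine ⟨x, ⟨i.removeNth x, ?_, ?_⟩, ?_⟩
      · -- removeNth x ∈ box
        intro k _
        simp only [Fin.removeNth, mem_Icc]
        have h := abs_le.mp (habs (i.succAbove k))
        exact ⟨h.1, h.2⟩
      · -- g (i,b) (removeNth x) = x
        simp only [hg]
        rw [Equiv.symm_apply_eq]
        have hbval : (if b then (1:ℝ) else -1) = x i := by
          rcases hb with h | h
          · simp [hbdef, h]
          · have hbf : b = false := by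
              rw [hbdef]; apply decide_eq_false; rw [h]; norm_num
            simp [hbf, h]
        rw [hbval]
        exact Fin.insertNth_self_removeNth i _
      · -- f x = u
        have hxn : ‖x‖ = s⁻¹ := by
          rw [hx, norm_smul, hnorm, mul_one, Real.norm_eq_abs, abs_inv, abs_abs]
        simp only [hf, hxn, inv_inv, hx, smul_smul]
        rw [← hx, hxn, inv_inv, mul_inv_cancel₀ (ne_of_gt hs), one_smul]
    -- measure estimate
    have hmono := measure_mono (μ := μH[(m:ℝ)]) hcover
    have hunion : μH[(m:ℝ)] (⋃ p, f '' (g p '' box)) ≤ ∑' p, μH[(m:ℝ)] (f '' (g p '' box)) :=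
      measure_iUnion_le _
    have hterm : ∀ p, μH[(m:ℝ)] (f '' (g p '' box)) < ⊤ := by
      intro p
      have hdom : g p '' box ⊆ {x : Euc (m+1) | 1 ≤ ‖x‖} := by
        rintro _ ⟨y, hy, rfl⟩
        exact hgdom p y hy
      have h1 : μH[(m:ℝ)] (f '' (g p '' box)) ≤ (2:ℝ≥0)^(m:ℝ) * μH[(m:ℝ)] (g p '' box) :=
        (normalize_lipschitz.mono hdom).hausdorffMeasure_image_le (by positivity)
      have h2 : μH[(m:ℝ)] (g p '' box)
          ≤ (K : ℝ≥0∞)^(m:ℝ) * μH[(m:ℝ)] box :=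
        (hglip p).hausdorffMeasure_image_le (by positivity) box
      have hbox_fin : μH[(m:ℝ)] box < ⊤ := by
        have : (μH[(m:ℝ)] : Measure (Fin m → ℝ)) = volume := by
          have := MeasureTheory.hausdorffMeasure_pi_real (ι := Fin m)
          simpa using this
        rw [this]
        exact (isCompact_univ_pi (fun _ => isCompact_Icc)).measure_lt_top
      calc μH[(m:ℝ)] (f '' (g p '' box))
          ≤ (2:ℝ≥0)^(m:ℝ) * ((K : ℝ≥0∞)^(m:ℝ)
              * μH[(m:ℝ)] box) := le_trans h1 (by
                gcongr)
        _ < ⊤ := by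
            apply ENNReal.mul_lt_top
            · exact ENNReal.rpow_lt_top_of_nonneg (by positivity) (by simp)
            · apply ENNReal.mul_lt_top
              · exact ENNReal.rpow_lt_top_of_nonneg (by positivity) (by simp)
              · exact hbox_fin
    calc μH[(m:ℝ)] (usphere (m+1)) ≤ ∑' p, μH[(m:ℝ)] (f '' (g p '' box)) :=
          le_trans hmono hunion
      _ < ⊤ := by
          rw [tsum_fintype]
          exact ENNReal.sum_lt_top.mpr (fun p _ => hterm p)

theorem stmt3 (n : ℕ) (G Gt : ℝ → Euc n → ℝ)
    (hG : ContinuousOn (fun p : ℝ × Euc n => G p.1 p.2) (Ioi 0 ×ˢ usphere n))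
    (hGt : ContinuousOn (fun p : ℝ × Euc n => Gt p.1 p.2) (Ioi 0 ×ˢ usphere n))
    (hGtderiv : ∀ t ∈ Ioi (0:ℝ), ∀ u ∈ usphere n,
      HasDerivAt (fun s => G s u) (Gt t u) t)
    (φ1 φ2 : ℝ → ℝ)
    (hφ1c : ContinuousOn φ1 (Ioi 0)) (hφ2c : ContinuousOn φ2 (Ioi 0))
    (hφ1pos : ∀ t > (0:ℝ), 0 < φ1 t) (hφ2pos : ∀ t > (0:ℝ), 0 < φ2 t)
    (hφ1mono : StrictMonoOn φ1 (Ioi 0)) (hφ2mono : StrictMonoOn φ2 (Ioi 0))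
    (hφ1one : φ1 1 = 1) (hφ2one : φ2 1 = 1)
    (hφ1zero : Tendsto φ1 (𝓝[>] (0:ℝ)) (𝓝 0)) (hφ2zero : Tendsto φ2 (𝓝[>] (0:ℝ)) (𝓝 0))
    (hφ1top : Tendsto φ1 atTop atTop) (hφ2top : Tendsto φ2 atTop atTop)
    (d : ℝ) (hd : 0 < d) (hldiff : HasDerivWithinAt φ1 d (Iio 1) 1)
    (ρK ρL : Euc n → ℝ)
    (hρK : ContinuousOn ρK (usphere n)) (hρKpos : ∀ u ∈ usphere n, 0 < ρK u)
    (hρL : ContinuousOn ρL (usphere n)) (hρLpos : ∀ u ∈ usphere n, 0 < ρL u)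
    (ρe : ℝ → Euc n → ℝ)
    (hρe : ∀ ε > (0:ℝ), ∀ u ∈ usphere n, 0 < ρe ε u ∧
      φ1 (ρK u / ρe ε u) + ε * φ2 (ρL u / ρe ε u) = 1) :
    Tendsto (fun ε => ((∫ u, G (ρe ε u) u ∂smeas n) - ∫ u, G (ρK u) u ∂smeas n) / ε)
      (𝓝[>] (0:ℝ))
      (𝓝 ((1/d) * ∫ u, φ2 (ρL u / ρK u) * ρK u * Gt (ρK u) u ∂smeas n)) := by
  have hsmeas_def : smeas n = (μH[(n : ℝ) - 1]).restrict (usphere n) := rfl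
  haveI hfin : IsFiniteMeasure (smeas n) := by
    constructor
    rw [hsmeas_def, Measure.restrict_apply_univ]
    exact sphere_fin n
  have hSmeas : MeasurableSet (usphere n) :=
    (isClosed_sphere : IsClosed (Metric.sphere (0 : Euc n) 1)).measurableSet
  have hScomp : IsCompact (usphere n) := isCompact_sphere 0 1
  rcases (usphere n).eq_empty_or_nonempty with hSe | hSne
  · have hzero : smeas n = 0 := by
      rw [hsmeas_def, hSe, Measure.restrict_empty]
    simp only [hzero, integral_zero_measure, mul_zero, sub_zero, zero_div, sub_self]
    exact tendsto_const_nhds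
  -- monotone versions
  have hφ1m : MonotoneOn φ1 (Ioi 0) := hφ1mono.monotoneOn
  have hφ2m : MonotoneOn φ2 (Ioi 0) := hφ2mono.monotoneOn
  -- strict antitonicity of the defining function in ρ
  have hanti : ∀ ε > (0:ℝ), ∀ u ∈ usphere n, ∀ a b : ℝ, 0 < a → a < b →
      φ1 (ρK u / b) + ε * φ2 (ρL u / b) < φ1 (ρK u / a) + ε * φ2 (ρL u / a) := by
    intro ε hε u hu a b ha hab
    have hKu := hρKpos u hu
    have hLu := hρLpos u hu
    have hb : 0 < b := ha.trans hab
    have h1 : ρK u / b < ρK u / a := by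
      apply div_lt_div_of_pos_left hKu ha hab
    have h2 : ρL u / b < ρL u / a := by
      apply div_lt_div_of_pos_left hLu ha hab
    have m1 : ρK u / b ∈ Ioi (0:ℝ) := by exact div_pos hKu hb
    have m2 : ρK u / a ∈ Ioi (0:ℝ) := by exact div_pos hKu ha
    have m3 : ρL u / b ∈ Ioi (0:ℝ) := by exact div_pos hLu hb
    have m4 : ρL u / a ∈ Ioi (0:ℝ) := by exact div_pos hLu ha
    have := hφ1mono m1 m2 h1
    have := mul_lt_mul_of_pos_left (hφ2mono m3 m4 h2) hε
    linarith
  have hanti' : ∀ ε > (0:ℝ), ∀ u ∈ usphere n, ∀ a b : ℝ, 0 < a → a ≤ b →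
      φ1 (ρK u / b) + ε * φ2 (ρL u / b) ≤ φ1 (ρK u / a) + ε * φ2 (ρL u / a) := by
    intro ε hε u hu a b ha hab
    rcases eq_or_lt_of_le hab with rfl | h
    · exact le_refl _
    · exact (hanti ε hε u hu a b ha h).le
  -- lower bound : ρK < ρe
  have hlb : ∀ ε > (0:ℝ), ∀ u ∈ usphere n, ρK u < ρe ε u := by
    intro ε hε u hu
    obtain ⟨hpos, heq⟩ := hρe ε hε u hu
    have hKu := hρKpos u hu
    have hLu := hρLpos u hu
    by_contra h
    push_neg at h
    have ht : (1:ℝ) ≤ ρK u / ρe ε u := (one_le_div hpos).2 h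
    have h1 : (1:ℝ) ≤ φ1 (ρK u / ρe ε u) := by
      rcases eq_or_lt_of_le ht with h' | h'
      · rw [← h', hφ1one]
      · have := hφ1mono (mem_Ioi.2 one_pos) (mem_Ioi.2 (one_pos.trans h')) h'
        rw [hφ1one] at this
        linarith
    have h2 : 0 < ε * φ2 (ρL u / ρe ε u) :=
      mul_pos hε (hφ2pos _ (div_pos hLu hpos))
    linarith

  -- continuity of ρe ε on the sphere
  have hρecont : ∀ ε > (0:ℝ), ContinuousOn (fun u => ρe ε u) (usphere n) := by
    intro ε hε u₀ hu₀
    obtain ⟨hpos₀, heq₀⟩ := hρe ε hε u₀ hu₀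
    rw [ContinuousWithinAt, Metric.tendsto_nhds]
    intro δ hδ
    set ρ₀ := ρe ε u₀ with hρ₀
    set δ' := min (δ/2) (ρ₀/2) with hδ'
    have hδ'pos : 0 < δ' := lt_min (by linarith) (by linarith)
    have hδ'lt : δ' < δ := lt_of_le_of_lt (min_le_left _ _) (by linarith)
    have hsub : 0 < ρ₀ - δ' := by
      have : δ' ≤ ρ₀/2 := min_le_right _ _
      linarith
    have hlt1 : φ1 (ρK u₀ / (ρ₀ + δ')) + ε * φ2 (ρL u₀ / (ρ₀ + δ')) < 1 := by
      have := hanti ε hε u₀ hu₀ ρ₀ (ρ₀ + δ') hpos₀ (by linarith)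
      linarith [heq₀]
    have hgt1 : 1 < φ1 (ρK u₀ / (ρ₀ - δ')) + ε * φ2 (ρL u₀ / (ρ₀ - δ')) := by
      have := hanti ε hε u₀ hu₀ (ρ₀ - δ') ρ₀ hsub (by linarith)
      linarith [heq₀]
    -- continuity in u of the auxiliary functions
    have haux : ∀ c : ℝ, 0 < c → ContinuousWithinAt
        (fun u => φ1 (ρK u / c) + ε * φ2 (ρL u / c)) (usphere n) u₀ := by
      intro c hc
      have hKc : ContinuousWithinAt (fun u => ρK u / c) (usphere n) u₀ :=
        (hρK u₀ hu₀).div_const c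
      have hLc : ContinuousWithinAt (fun u => ρL u / c) (usphere n) u₀ :=
        (hρL u₀ hu₀).div_const c
      have h1 : ContinuousAt φ1 (ρK u₀ / c) :=
        hφ1c.continuousAt (Ioi_mem_nhds (div_pos (hρKpos u₀ hu₀) hc))
      have h2 : ContinuousAt φ2 (ρL u₀ / c) :=
        hφ2c.continuousAt (Ioi_mem_nhds (div_pos (hρLpos u₀ hu₀) hc))
      have hA := ContinuousAt.comp_continuousWithinAt (f := fun u => ρK u / c) h1 hKc
      have hB := ContinuousAt.comp_continuousWithinAt (f := fun u => ρL u / c) h2 hLc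
      exact hA.add (continuousWithinAt_const.mul hB)
    have hev1 : ∀ᶠ u in 𝓝[usphere n] u₀,
        φ1 (ρK u / (ρ₀ + δ')) + ε * φ2 (ρL u / (ρ₀ + δ')) < 1 :=
      (haux (ρ₀ + δ') (by linarith)).eventually_lt_const hlt1
    have hev2 : ∀ᶠ u in 𝓝[usphere n] u₀,
        1 < φ1 (ρK u / (ρ₀ - δ')) + ε * φ2 (ρL u / (ρ₀ - δ')) :=
      (haux (ρ₀ - δ') hsub).eventually_const_lt hgt1
    filter_upwards [hev1, hev2, self_mem_nhdsWithin] with u h1 h2 hu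
    obtain ⟨hposu, hequ⟩ := hρe ε hε u hu
    have hub : ρe ε u < ρ₀ + δ' := by
      by_contra h
      push_neg at h
      have := hanti' ε hε u hu (ρ₀ + δ') (ρe ε u) (by linarith) h
      rw [hequ] at this
      linarith
    have hlbu : ρ₀ - δ' < ρe ε u := by
      by_contra h
      push_neg at h
      have := hanti' ε hε u hu (ρe ε u) (ρ₀ - δ') hposu h
      rw [hequ] at this
      linarith
    rw [Real.dist_eq, abs_sub_lt_iff]
    constructor <;> linarith
  -- extremal constants
  obtain ⟨uK, huK, hminK⟩ := hScomp.exists_isMinOn hSne hρK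
  obtain ⟨uK', huK', hmaxK⟩ := hScomp.exists_isMaxOn hSne hρK
  obtain ⟨uL', huL', hmaxL⟩ := hScomp.exists_isMaxOn hSne hρL
  set mK := ρK uK with hmK
  set MK := ρK uK' with hMK
  set ML := ρL uL' with hML
  have hmKpos : 0 < mK := hρKpos uK huK
  have hMKpos : 0 < MK := hρKpos uK' huK'
  have hMLpos : 0 < ML := hρLpos uL' huL'
  have hmK_le : ∀ u ∈ usphere n, mK ≤ ρK u := fun u hu => hminK hu
  have hMK_ge : ∀ u ∈ usphere n, ρK u ≤ MK := fun u hu => hmaxK hu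
  have hML_ge : ∀ u ∈ usphere n, ρL u ≤ ML := fun u hu => hmaxL hu
  -- small constants c1 c2 with φi ci < 1/2
  obtain ⟨c1, hc1mem, hc1⟩ : ∃ c1, c1 ∈ Ioi (0:ℝ) ∧ φ1 c1 < 1/2 := by
    have := (hφ1zero.eventually_lt_const (by norm_num : (0:ℝ) < 1/2)).and
      self_mem_nhdsWithin
    obtain ⟨c, h1, h2⟩ := this.exists
    exact ⟨c, h2, h1⟩
  obtain ⟨c2, hc2mem, hc2⟩ : ∃ c2, c2 ∈ Ioi (0:ℝ) ∧ φ2 c2 < 1/2 := by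
    have := (hφ2zero.eventually_lt_const (by norm_num : (0:ℝ) < 1/2)).and
      self_mem_nhdsWithin
    obtain ⟨c, h1, h2⟩ := this.exists
    exact ⟨c, h2, h1⟩
  have hc1pos : 0 < c1 := hc1mem
  have hc2pos : 0 < c2 := hc2mem
  set Rmax := max (MK / c1) (ML / c2) with hRmax
  have hRmaxpos : 0 < Rmax := lt_of_lt_of_le (div_pos hMKpos hc1pos) (le_max_left _ _)
  -- upper bound for ρe
  have hub : ∀ ε ∈ Ioc (0:ℝ) 1, ∀ u ∈ usphere n, ρe ε u ≤ Rmax := by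
    rintro ε ⟨hε, hε1⟩ u hu
    obtain ⟨hpos, heq⟩ := hρe ε hε u hu
    have hKu := hρKpos u hu
    have hLu := hρLpos u hu
    by_contra h
    push_neg at h
    have h1 : ρK u / ρe ε u < c1 := by
      rw [div_lt_iff₀ hpos]
      calc ρK u ≤ MK := hMK_ge u hu
        _ = c1 * (MK / c1) := by field_simp
        _ ≤ c1 * Rmax := by
            apply mul_le_mul_of_nonneg_left (le_max_left _ _) hc1pos.le
        _ < c1 * ρe ε u := by
            apply mul_lt_mul_of_pos_left h hc1pos
    have h2 : ρL u / ρe ε u < c2 := by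
      rw [div_lt_iff₀ hpos]
      calc ρL u ≤ ML := hML_ge u hu
        _ = c2 * (ML / c2) := by field_simp
        _ ≤ c2 * Rmax := by
            apply mul_le_mul_of_nonneg_left (le_max_right _ _) hc2pos.le
        _ < c2 * ρe ε u := by
            apply mul_lt_mul_of_pos_left h hc2pos
    have hφ1lt : φ1 (ρK u / ρe ε u) < 1/2 :=
      lt_trans (hφ1mono (div_pos hKu hpos) hc1mem h1) hc1
    have hφ2lt : φ2 (ρL u / ρe ε u) < 1/2 :=
      lt_trans (hφ2mono (div_pos hLu hpos) hc2mem h2) hc2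
    have : ε * φ2 (ρL u / ρe ε u) ≤ φ2 (ρL u / ρe ε u) := by
      apply mul_le_of_le_one_left (hφ2pos _ (div_pos hLu hpos)).le hε1
    linarith

  -- the C₂ estimate : 1 - t ≤ C₂ (1 - φ1 t) on (0,1)
  obtain ⟨C₂, hC₂pos, hC₂⟩ : ∃ C₂ : ℝ, 0 < C₂ ∧ ∀ t : ℝ, 0 < t → t < 1 →
      1 - t ≤ C₂ * (1 - φ1 t) := by
    have hone : (1:ℝ) ∉ Iio (1:ℝ) := by simp
    have hsl := (hasDerivWithinAt_iff_tendsto_slope' hone).1 hldiff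
    have hev := hsl.eventually (eventually_gt_nhds (half_lt_self hd))
    rw [eventually_nhdsWithin_iff, Metric.eventually_nhds_iff] at hev
    obtain ⟨δ, hδpos, hδ⟩ := hev
    set δ' := min δ (1/2) with hδ'
    have hδ'pos : 0 < δ' := lt_min hδpos (by norm_num)
    have hδ'le : δ' ≤ 1/2 := min_le_right _ _
    have hsubpos : 0 < 1 - δ' := by linarith
    have hφlt : φ1 (1 - δ') < 1 := by
      have := hφ1mono (mem_Ioi.2 hsubpos) (mem_Ioi.2 one_pos) (by linarith)
      rwa [hφ1one] at this
    set η := 1 - φ1 (1 - δ') with hη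
    have hηpos : 0 < η := by simp only [hη]; linarith
    refine ⟨max (2/d) (1/η), lt_of_lt_of_le (div_pos two_pos hd) (le_max_left _ _), ?_⟩
    intro t ht0 ht1
    have hφt : φ1 t < 1 := by
      have := hφ1mono (mem_Ioi.2 ht0) (mem_Ioi.2 one_pos) ht1
      rwa [hφ1one] at this
    rcases lt_or_ge (1 - δ') t with hcase | hcase
    · -- close to 1 : use the derivative
      have hdist : dist t 1 < δ := by
        rw [Real.dist_eq, abs_sub_lt_iff]
        have hmin : δ' ≤ δ := min_le_left _ _
        constructor <;> linarith
      have hslope := hδ hdist (mem_Iio.2 ht1)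
      have hslope' : d/2 < (1 - φ1 t)/(1 - t) := by
        have heqs : slope φ1 1 t = (1 - φ1 t)/(1 - t) := by
          rw [slope_def_field, hφ1one]
          rw [div_eq_div_iff (by linarith : t - 1 ≠ 0) (by linarith : (1:ℝ) - t ≠ 0)]
          ring
        rwa [heqs] at hslope
      have hlt : d/2 * (1 - t) < 1 - φ1 t := by
        rw [lt_div_iff₀ (by linarith : (0:ℝ) < 1 - t)] at hslope'
        exact hslope'
      calc 1 - t = (2/d) * (d/2 * (1 - t)) := by field_simp
        _ ≤ (2/d) * (1 - φ1 t) := by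
            apply mul_le_mul_of_nonneg_left hlt.le (by positivity)
        _ ≤ max (2/d) (1/η) * (1 - φ1 t) := by
            apply mul_le_mul_of_nonneg_right (le_max_left _ _) (by linarith)
    · -- far from 1 : use η
      have hφle : φ1 t ≤ φ1 (1 - δ') := hφ1m (mem_Ioi.2 ht0) (mem_Ioi.2 hsubpos) hcase
      have h1 : η ≤ 1 - φ1 t := by simp only [hη]; linarith
      calc 1 - t ≤ 1 := by linarith
        _ = (1/η) * η := by field_simp
        _ ≤ (1/η) * (1 - φ1 t) := by
            apply mul_le_mul_of_nonneg_left h1 (by positivity)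
        _ ≤ max (2/d) (1/η) * (1 - φ1 t) := by
            apply mul_le_mul_of_nonneg_right (le_max_right _ _) (by linarith)
  -- the ratio bound
  set q := ML / mK with hq
  have hqpos : 0 < q := div_pos hMLpos hmKpos
  have hφ2q : ∀ ε > (0:ℝ), ∀ u ∈ usphere n, φ2 (ρL u / ρe ε u) ≤ φ2 q := by
    intro ε hε u hu
    obtain ⟨hpos, _⟩ := hρe ε hε u hu
    have hKu := hρKpos u hu
    have hLu := hρLpos u hu
    have hle : ρL u / ρe ε u ≤ q := by
      rw [hq]
      apply div_le_div₀ (le_of_lt hMLpos) (hML_ge u hu) hmKpos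
      exact le_trans (hmK_le u hu) (hlb ε hε u hu).le
    exact hφ2m (mem_Ioi.2 (div_pos hLu hpos)) (mem_Ioi.2 hqpos) hle
  set cb := C₂ * φ2 q * Rmax with hcb
  have hφ2qpos : 0 < φ2 q := hφ2pos _ hqpos
  have hcbpos : 0 < cb := by positivity
  -- key quantitative bound
  have hkey : ∀ ε ∈ Ioc (0:ℝ) 1, ∀ u ∈ usphere n, ρe ε u - ρK u ≤ ε * cb := by
    rintro ε ⟨hε, hε1⟩ u hu
    obtain ⟨hpos, heq⟩ := hρe ε hε u hu
    have hKu := hρKpos u hu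
    set t := ρK u / ρe ε u with htdef
    have ht0 : 0 < t := div_pos hKu hpos
    have ht1 : t < 1 := (div_lt_one hpos).2 (hlb ε hε u hu)
    have heq' : 1 - φ1 t = ε * φ2 (ρL u / ρe ε u) := by linarith
    have h1 : 1 - t ≤ C₂ * (ε * φ2 (ρL u / ρe ε u)) := by
      rw [← heq']
      exact hC₂ t ht0 ht1
    have h2 : C₂ * (ε * φ2 (ρL u / ρe ε u)) ≤ ε * (C₂ * φ2 q) := by
      rw [show ε * (C₂ * φ2 q) = C₂ * (ε * φ2 q) by ring]
      apply mul_le_mul_of_nonneg_left _ hC₂pos.le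
      exact mul_le_mul_of_nonneg_left (hφ2q ε hε u hu) hε.le
    have h3 : ρe ε u - ρK u = ρe ε u * (1 - t) := by
      rw [htdef, mul_sub, mul_one, mul_div_assoc', mul_div_right_comm, div_self hpos.ne', one_mul]
    rw [h3]
    calc ρe ε u * (1 - t) ≤ Rmax * (1 - t) := by
          apply mul_le_mul_of_nonneg_right (hub ε ⟨hε, hε1⟩ u hu) (by linarith)
      _ ≤ Rmax * (ε * (C₂ * φ2 q)) := by
          apply mul_le_mul_of_nonneg_left (le_trans h1 h2) hRmaxpos.le
      _ = ε * cb := by rw [hcb]; ring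

  -- compact window and bounds for G, Gt
  have hc1lt1 : c1 < 1 := by
    by_contra h
    push_neg at h
    have := hφ1m (mem_Ioi.2 one_pos) hc1mem h
    rw [hφ1one] at this
    linarith
  have hsubset : Icc mK Rmax ×ˢ usphere n ⊆ Ioi 0 ×ˢ usphere n := by
    rintro ⟨a, u⟩ ⟨⟨h1, _⟩, hu⟩
    exact ⟨lt_of_lt_of_le hmKpos h1, hu⟩
  have hcompKS : IsCompact (Icc mK Rmax ×ˢ usphere n) := isCompact_Icc.prod hScomp
  obtain ⟨C₁, hC₁⟩ := hcompKS.exists_bound_of_continuousOn (hGt.mono hsubset)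
  obtain ⟨C₀, hC₀⟩ := hcompKS.exists_bound_of_continuousOn (hG.mono hsubset)
  have hMKRmax : MK ≤ Rmax := by
    have h1 : MK ≤ MK / c1 := by
      rw [le_div_iff₀ hc1pos]
      nlinarith
    exact le_trans h1 (le_max_left _ _)
  have hKmem : ∀ u ∈ usphere n, ρK u ∈ Icc mK Rmax :=
    fun u hu => ⟨hmK_le u hu, le_trans (hMK_ge u hu) hMKRmax⟩
  have hemem : ∀ ε ∈ Ioc (0:ℝ) 1, ∀ u ∈ usphere n, ρe ε u ∈ Icc mK Rmax := by
    rintro ε hε u hu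
    exact ⟨le_trans (hmK_le u hu) (hlb ε hε.1 u hu).le, hub ε hε u hu⟩
  -- ae helper and integrability
  have haeS : ∀ {p : Euc n → Prop}, (∀ u ∈ usphere n, p u) → (∀ᵐ u ∂smeas n, p u) := by
    intro p h
    rw [hsmeas_def]
    exact ae_restrict_of_forall_mem hSmeas h
  have hIntOf : ∀ (f : Euc n → ℝ) (C : ℝ), ContinuousOn f (usphere n) →
      (∀ u ∈ usphere n, ‖f u‖ ≤ C) → Integrable f (smeas n) := by
    intro f C hc hb
    have hm : AEStronglyMeasurable f (smeas n) := by
      rw [hsmeas_def]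
      exact hc.aestronglyMeasurable hSmeas
    exact ⟨hm, HasFiniteIntegral.of_bounded (haeS hb)⟩
  have hGKcont : ContinuousOn (fun u => G (ρK u) u) (usphere n) := by
    have hc : ContinuousOn (fun u : Euc n => (ρK u, u)) (usphere n) :=
      hρK.prodMk continuousOn_id
    have hmaps : MapsTo (fun u : Euc n => (ρK u, u)) (usphere n) (Ioi 0 ×ˢ usphere n) :=
      fun u hu => ⟨hρKpos u hu, hu⟩
    exact hG.comp hc hmaps
  have hGcomp : ∀ ε ∈ Ioc (0:ℝ) 1, ContinuousOn (fun u => G (ρe ε u) u) (usphere n) := by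
    rintro ε hε
    have hc : ContinuousOn (fun u : Euc n => (ρe ε u, u)) (usphere n) :=
      (hρecont ε hε.1).prodMk continuousOn_id
    have hmaps : MapsTo (fun u : Euc n => (ρe ε u, u)) (usphere n) (Ioi 0 ×ˢ usphere n) :=
      fun u hu => ⟨(hρe ε hε.1 u hu).1, hu⟩
    exact hG.comp hc hmaps
  have hIntK : Integrable (fun u => G (ρK u) u) (smeas n) :=
    hIntOf _ C₀ hGKcont (fun u hu => hC₀ (ρK u, u) ⟨hKmem u hu, hu⟩)
  have hInt : ∀ ε ∈ Ioc (0:ℝ) 1, Integrable (fun u => G (ρe ε u) u) (smeas n) :=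
    fun ε hε => hIntOf _ C₀ (hGcomp ε hε)
      (fun u hu => hC₀ (ρe ε u, u) ⟨hemem ε hε u hu, hu⟩)
  -- eventual facts
  have hevIoc : ∀ᶠ ε in 𝓝[>] (0:ℝ), ε ∈ Ioc (0:ℝ) 1 :=
    Ioc_mem_nhdsGT_of_mem ⟨le_refl 0, zero_lt_one⟩
  -- pointwise limit
  have hptlim : ∀ u ∈ usphere n, Tendsto (fun ε => (G (ρe ε u) u - G (ρK u) u) / ε)
      (𝓝[>] (0:ℝ)) (𝓝 (φ2 (ρL u / ρK u) * ρK u * Gt (ρK u) u / d)) := by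
    intro u hu
    have hKu := hρKpos u hu
    have hLu := hρLpos u hu
    -- t → 1
    have htt : Tendsto (fun ε => ρK u / ρe ε u) (𝓝[>] (0:ℝ)) (𝓝 1) := by
      rw [tendsto_order]
      constructor
      · intro b hb
        rcases le_or_gt b 0 with hb0 | hb0
        · filter_upwards [hevIoc] with ε hε
          exact lt_of_le_of_lt hb0 (div_pos hKu (hρe ε hε.1 u hu).1)
        · have hφb : φ1 b < 1 := by
            have := hφ1mono (mem_Ioi.2 hb0) (mem_Ioi.2 one_pos) hb
            rwa [hφ1one] at this
          have htends : Tendsto (fun ε : ℝ => ε * φ2 q) (𝓝[>] (0:ℝ)) (𝓝 0) := by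
            simpa using ((continuous_id.tendsto (0:ℝ)).mono_left
              nhdsWithin_le_nhds).mul_const (φ2 q)
          have hev := htends.eventually_lt_const (show (0:ℝ) < 1 - φ1 b by linarith)
          filter_upwards [hev, hevIoc] with ε h1 h2
          obtain ⟨hpos, heq⟩ := hρe ε h2.1 u hu
          have hb2 : ε * φ2 (ρL u / ρe ε u) < 1 - φ1 b := by
            have := mul_le_mul_of_nonneg_left (hφ2q ε h2.1 u hu) h2.1.le
            linarith
          by_contra hcon
          push_neg at hcon
          have := hφ1m (mem_Ioi.2 (div_pos hKu hpos)) (mem_Ioi.2 hb0) hcon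
          linarith
      · intro b hb
        filter_upwards [hevIoc] with ε hε
        exact lt_trans ((div_lt_one (hρe ε hε.1 u hu).1).2 (hlb ε hε.1 u hu)) hb
    -- ρe → ρK
    have htρ : Tendsto (fun ε => ρe ε u) (𝓝[>] (0:ℝ)) (𝓝 (ρK u)) := by
      have h1 : Tendsto (fun ε => ρK u / (ρK u / ρe ε u)) (𝓝[>] (0:ℝ)) (𝓝 (ρK u / 1)) :=
        tendsto_const_nhds.div htt one_ne_zero
      rw [div_one] at h1
      apply Tendsto.congr' _ h1
      filter_upwards [hevIoc] with ε hε
      have hpos := (hρe ε hε.1 u hu).1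
      field_simp
    -- slope of φ1 at 1 along t
    have hident : ∀ z : ℝ, slope φ1 1 z = (1 - φ1 z) / (1 - z) := by
      intro z
      rcases eq_or_ne z 1 with rfl | hz
      · simp [slope_def_field]
      · rw [slope_def_field, hφ1one,
          div_eq_div_iff (sub_ne_zero.2 hz) (sub_ne_zero.2 (Ne.symm hz))]
        ring
    have hslope1 : Tendsto (fun ε => (1 - φ1 (ρK u / ρe ε u)) / (1 - ρK u / ρe ε u))
        (𝓝[>] (0:ℝ)) (𝓝 d) := by
      have hone : (1:ℝ) ∉ Iio (1:ℝ) := by simp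
      have hsl := (hasDerivWithinAt_iff_tendsto_slope' hone).1 hldiff
      have httIio : Tendsto (fun ε => ρK u / ρe ε u) (𝓝[>] (0:ℝ)) (𝓝[Iio 1] 1) := by
        rw [tendsto_nhdsWithin_iff]
        refine ⟨htt, ?_⟩
        filter_upwards [hevIoc] with ε hε
        exact mem_Iio.2 ((div_lt_one (hρe ε hε.1 u hu).1).2 (hlb ε hε.1 u hu))
      have hcomp := hsl.comp httIio
      apply hcomp.congr
      intro ε
      simp only [Function.comp_apply, hident]
    -- φ2 term
    have hphi2 : Tendsto (fun ε => φ2 (ρL u / ρe ε u)) (𝓝[>] (0:ℝ))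
        (𝓝 (φ2 (ρL u / ρK u))) := by
      have hca : ContinuousAt φ2 (ρL u / ρK u) :=
        hφ2c.continuousAt (Ioi_mem_nhds (div_pos hLu hKu))
      exact hca.tendsto.comp (tendsto_const_nhds.div htρ (ne_of_gt hKu))
    -- (1-t)/ε  →  φ2/d
    have hstep : Tendsto (fun ε => (1 - ρK u / ρe ε u) / ε) (𝓝[>] (0:ℝ))
        (𝓝 (φ2 (ρL u / ρK u) / d)) := by
      have h0 := hphi2.div hslope1 (ne_of_gt hd)
      apply Tendsto.congr' _ h0
      filter_upwards [hevIoc] with ε hε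
      obtain ⟨hpos, heq⟩ := hρe ε hε.1 u hu
      have ht1 : ρK u / ρe ε u < 1 := (div_lt_one hpos).2 (hlb ε hε.1 u hu)
      have heq' : 1 - φ1 (ρK u / ρe ε u) = ε * φ2 (ρL u / ρe ε u) := by linarith
      have hφX : 0 < φ2 (ρL u / ρe ε u) := hφ2pos _ (div_pos hLu hpos)
      show φ2 (ρL u / ρe ε u) / ((1 - φ1 (ρK u / ρe ε u)) / (1 - ρK u / ρe ε u))
          = (1 - ρK u / ρe ε u) / ε
      rw [heq', div_div_eq_mul_div, mul_comm ε (φ2 (ρL u / ρe ε u)),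
        mul_div_mul_left _ _ (ne_of_gt hφX)]
    -- (ρe - ρK)/ε
    have hratio : Tendsto (fun ε => (ρe ε u - ρK u) / ε) (𝓝[>] (0:ℝ))
        (𝓝 (ρK u * (φ2 (ρL u / ρK u) / d))) := by
      have h0 := htρ.mul hstep
      apply Tendsto.congr' _ h0
      filter_upwards [hevIoc] with ε hε
      obtain ⟨hpos, _⟩ := hρe ε hε.1 u hu
      have hεne : ε ≠ 0 := ne_of_gt hε.1
      field_simp
    -- G slope
    have hslopeG : Tendsto (fun ε => (G (ρe ε u) u - G (ρK u) u) / (ρe ε u - ρK u))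
        (𝓝[>] (0:ℝ)) (𝓝 (Gt (ρK u) u)) := by
      have hD := hGtderiv (ρK u) hKu u hu
      rw [hasDerivAt_iff_tendsto_slope] at hD
      have hρne : Tendsto (fun ε => ρe ε u) (𝓝[>] (0:ℝ)) (𝓝[≠] (ρK u)) := by
        rw [tendsto_nhdsWithin_iff]
        refine ⟨htρ, ?_⟩
        filter_upwards [hevIoc] with ε hε
        exact mem_compl_singleton_iff.2 (hlb ε hε.1 u hu).ne'
      have hcomp := hD.comp hρne
      apply hcomp.congr
      intro ε
      simp only [Function.comp_apply, slope_def_field]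
    -- combine
    have hmul := hslopeG.mul hratio
    rw [show φ2 (ρL u / ρK u) * ρK u * Gt (ρK u) u / d
        = Gt (ρK u) u * (ρK u * (φ2 (ρL u / ρK u) / d)) by ring]
    apply Tendsto.congr' _ hmul
    filter_upwards [hevIoc] with ε hε
    have hne : ρe ε u - ρK u ≠ 0 := ne_of_gt (sub_pos.2 (hlb ε hε.1 u hu))
    have hεne : ε ≠ 0 := ne_of_gt hε.1
    field_simp
  -- dominated convergence
  have hDCT := tendsto_integral_filter_of_dominated_convergence (μ := smeas n)
    (l := 𝓝[>] (0:ℝ))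
    (F := fun ε (u : Euc n) => (G (ρe ε u) u - G (ρK u) u) / ε)
    (f := fun u => φ2 (ρL u / ρK u) * ρK u * Gt (ρK u) u / d)
    (fun _ => C₁ * cb)
    (by
      filter_upwards [hevIoc] with ε hε
      have hc : ContinuousOn (fun u => (G (ρe ε u) u - G (ρK u) u) / ε) (usphere n) :=
        ((hGcomp ε hε).sub hGKcont).div_const ε
      rw [hsmeas_def]
      exact hc.aestronglyMeasurable hSmeas)
    (by
      filter_upwards [hevIoc] with ε hε
      apply haeS
      intro u hu
      have hKu := hρKpos u hu
      obtain ⟨hpos, heq⟩ := hρe ε hε.1 u hu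
      have hab : ρK u < ρe ε u := hlb ε hε.1 u hu
      have contG : ContinuousOn (fun s => G s u) (Icc (ρK u) (ρe ε u)) := by
        have hc : ContinuousOn (fun s : ℝ => (s, u)) (Icc (ρK u) (ρe ε u)) :=
          (continuous_id.prodMk continuous_const).continuousOn
        have hmaps : MapsTo (fun s : ℝ => (s, u)) (Icc (ρK u) (ρe ε u))
            (Ioi 0 ×ˢ usphere n) := fun s hs => ⟨lt_of_lt_of_le hKu hs.1, hu⟩
        exact hG.comp hc hmaps
      have hder : ∀ x ∈ Ioo (ρK u) (ρe ε u), HasDerivAt (fun s => G s u) (Gt x u) x :=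
        fun x hx => hGtderiv x (mem_Ioi.2 (lt_trans hKu hx.1)) u hu
      obtain ⟨ξ, hξmem, hξeq⟩ := exists_hasDerivAt_eq_slope (fun s => G s u)
        (fun s => Gt s u) hab contG hder
      rw [eq_div_iff (ne_of_gt (sub_pos.2 hab))] at hξeq
      have hξbd : ‖Gt ξ u‖ ≤ C₁ := hC₁ (ξ, u)
        ⟨⟨le_trans (hmK_le u hu) hξmem.1.le, le_trans hξmem.2.le (hub ε hε u hu)⟩, hu⟩
      have hkey' : (ρe ε u - ρK u) / ε ≤ cb := by
        rw [div_le_iff₀ hε.1]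
        calc ρe ε u - ρK u ≤ ε * cb := hkey ε hε u hu
          _ = cb * ε := by ring
      calc ‖(G (ρe ε u) u - G (ρK u) u) / ε‖
          = ‖Gt ξ u‖ * ((ρe ε u - ρK u) / ε) := by
            rw [← hξeq, Real.norm_eq_abs, Real.norm_eq_abs, abs_div, abs_mul,
              abs_of_pos hε.1, abs_of_pos (sub_pos.2 hab), mul_div_assoc]
        _ ≤ C₁ * cb := by
            apply mul_le_mul hξbd hkey' (div_nonneg (sub_pos.2 hab).le hε.1.le)
              (le_trans (norm_nonneg _) hξbd)
    )
    (integrable_const _)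
    (haeS hptlim)
  -- conclude
  have hval : ∫ u, φ2 (ρL u / ρK u) * ρK u * Gt (ρK u) u / d ∂smeas n
      = (1/d) * ∫ u, φ2 (ρL u / ρK u) * ρK u * Gt (ρK u) u ∂smeas n := by
    rw [integral_div]
    ring
  rw [hval] at hDCT
  apply Tendsto.congr' _ hDCT
  filter_upwards [hevIoc] with ε hε
  rw [integral_div, integral_sub (hInt ε hε) hIntK]
end
end

section
/- Let n ≥ 2, q ≠ 0, let φ:(0,∞)→(0,∞) be continuous, and suppose φ_q(t) := φ(t^{1/q}) is convex on (0,∞). Let ρ_K, ρ_L, ρ_Q ∈ C(S^{n-1}) be strictly positive. Define Ṽ_q(K,Q) = (1/n)∫_{S^{n-1}} ρ_K(u)^q ρ_Q(u)^{n-q} du and Ṽ_{q,φ}(K,L,Q) = (1/n)∫_{S^{n-1}} φ(ρ_L(u)/ρ_K(u)) ρ_K(u)^q ρ_Q(u)^{n-q} du. Then Ṽ_{q,φ}(K,L,Q) ≥ Ṽ_q(K,Q) · φ((Ṽ_q(L,Q)/Ṽ_q(K,Q))^{1/q}). -/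
open MeasureTheory Metric Set Filter
open scoped RealInnerProductSpace NNReal ENNReal Topology

noncomputable section

def Vq (n : ℕ) (q : ℝ) (ρK ρQ : Euc n → ℝ) : ℝ :=
  (1/(n:ℝ)) * ∫ u, ρK u ^ q * ρQ u ^ ((n:ℝ) - q) ∂smeas n

def Vqφ (n : ℕ) (q : ℝ) (φ : ℝ → ℝ) (ρK ρL ρQ : Euc n → ℝ) : ℝ :=
  (1/(n:ℝ)) * ∫ u, φ (ρL u / ρK u) * ρK u ^ q * ρQ u ^ ((n:ℝ) - q) ∂smeas n

lemma supporting_slope {ψ : ℝ → ℝ} (hconv : ConvexOn ℝ (Ioi 0) ψ) {m : ℝ} (hm : 0 < m) :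
    ∃ a : ℝ, ∀ t ∈ Ioi (0:ℝ), ψ m + a * (t - m) ≤ ψ t := by
  set Sl : Set ℝ := (fun x => (ψ m - ψ x) / (m - x)) '' Ioo 0 m with hSl
  have hne : Sl.Nonempty := ⟨_, ⟨m/2, ⟨by linarith, by linarith⟩, rfl⟩⟩
  have hbdd : BddAbove Sl := by
    refine ⟨(ψ (m+1) - ψ m) / (m + 1 - m), ?_⟩
    rintro _ ⟨x, hx, rfl⟩
    exact hconv.slope_mono_adjacent hx.1 (by simp; linarith) hx.2 (by linarith)
  refine ⟨sSup Sl, fun t ht => ?_⟩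
  rcases lt_trichotomy t m with h | h | h
  · have h1 : (ψ m - ψ t) / (m - t) ≤ sSup Sl := le_csSup hbdd ⟨t, ⟨ht, h⟩, rfl⟩
    have h2 : ψ m - ψ t ≤ sSup Sl * (m - t) := by
      rw [div_le_iff₀ (by linarith)] at h1; linarith [h1]
    nlinarith
  · subst h; simp
  · have h1 : sSup Sl ≤ (ψ t - ψ m) / (t - m) := by
      apply csSup_le hne
      rintro _ ⟨x, hx, rfl⟩
      exact hconv.slope_mono_adjacent hx.1 ht hx.2 h
    rw [le_div_iff₀ (by linarith)] at h1
    linarith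

theorem stmt5 (n : ℕ) (hn : 2 ≤ n) (q : ℝ) (hq : q ≠ 0) (φ : ℝ → ℝ)
    (hφc : ContinuousOn φ (Ioi 0)) (hφpos : ∀ t > (0:ℝ), 0 < φ t)
    (hconv : ConvexOn ℝ (Ioi 0) (fun t : ℝ => φ (t ^ (1/q))))
    (ρK ρL ρQ : Euc n → ℝ)
    (hρK : ContinuousOn ρK (usphere n)) (hρKpos : ∀ u ∈ usphere n, 0 < ρK u)
    (hρL : ContinuousOn ρL (usphere n)) (hρLpos : ∀ u ∈ usphere n, 0 < ρL u)
    (hρQ : ContinuousOn ρQ (usphere n)) (hρQpos : ∀ u ∈ usphere n, 0 < ρQ u)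
 :
    Vqφ n q φ ρK ρL ρQ ≥ Vq n q ρK ρQ * φ ((Vq n q ρL ρQ / Vq n q ρK ρQ) ^ (1/q)) := by
  classical
  set S : Set (Euc n) := usphere n with hS
  have hScl : IsClosed S := isClosed_sphere
  have hSmeas : MeasurableSet S := hScl.measurableSet
  have hScomp : IsCompact S := isCompact_sphere 0 1
  set μ : Measure (Euc n) := smeas n with hμdef
  have hμres : μ = (μH[(n : ℝ) - 1]).restrict S := rfl
  have hAE : ∀ᵐ u ∂μ, u ∈ S := by rw [hμres]; exact ae_restrict_mem hSmeas
  -- basic functions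
  set w : Euc n → ℝ := fun u => ρK u ^ q * ρQ u ^ ((n:ℝ) - q) with hwdef
  set g : Euc n → ℝ := fun u => ρL u ^ q * ρQ u ^ ((n:ℝ) - q) with hgdef
  set f : Euc n → ℝ := fun u => (ρL u / ρK u) ^ q with hfdef
  set ψ : ℝ → ℝ := fun t => φ (t ^ (1/q)) with hψdef
  have hwcont : ContinuousOn w S :=
    (hρK.rpow_const (fun u hu => Or.inl (hρKpos u hu).ne')).mul
      (hρQ.rpow_const (fun u hu => Or.inl (hρQpos u hu).ne'))
  have hgcont : ContinuousOn g S :=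
    (hρL.rpow_const (fun u hu => Or.inl (hρLpos u hu).ne')).mul
      (hρQ.rpow_const (fun u hu => Or.inl (hρQpos u hu).ne'))
  have hdivcont : ContinuousOn (fun u => ρL u / ρK u) S :=
    hρL.div hρK (fun u hu => (hρKpos u hu).ne')
  have hfcont : ContinuousOn f S :=
    hdivcont.rpow_const (fun u hu => Or.inl (div_pos (hρLpos u hu) (hρKpos u hu)).ne')
  have hwpos : ∀ u ∈ S, 0 < w u := fun u hu =>
    mul_pos (Real.rpow_pos_of_pos (hρKpos u hu) _) (Real.rpow_pos_of_pos (hρQpos u hu) _)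
  have hgpos : ∀ u ∈ S, 0 < g u := fun u hu =>
    mul_pos (Real.rpow_pos_of_pos (hρLpos u hu) _) (Real.rpow_pos_of_pos (hρQpos u hu) _)
  have hfpos : ∀ u ∈ S, 0 < f u := fun u hu =>
    Real.rpow_pos_of_pos (div_pos (hρLpos u hu) (hρKpos u hu)) _
  set A : ℝ := ∫ u, w u ∂μ with hAdef
  set B : ℝ := ∫ u, g u ∂μ with hBdef
  have hVqK : Vq n q ρK ρQ = (1/(n:ℝ)) * A := rfl
  have hVqL : Vq n q ρL ρQ = (1/(n:ℝ)) * B := rfl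
  have hnpos : (0:ℝ) < (n:ℝ) := by positivity
  have hn0 : (1:ℝ)/(n:ℝ) ≠ 0 := by positivity
  -- φ(ρL/ρK) = ψ(f) on S
  have hpt : ∀ u ∈ S, φ (ρL u / ρK u) = ψ (f u) := by
    intro u hu
    have hd : 0 < ρL u / ρK u := div_pos (hρLpos u hu) (hρKpos u hu)
    rw [hψdef]
    simp only
    rw [hfdef]
    simp only
    rw [← Real.rpow_mul hd.le, mul_one_div_cancel hq, Real.rpow_one]
  have hAnn : 0 ≤ A := by
    apply integral_nonneg_of_ae
    filter_upwards [hAE] with u hu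
    exact (hwpos u hu).le
  have hφw_nonneg : ∀ᵐ u ∂μ, 0 ≤ φ (ρL u / ρK u) * ρK u ^ q * ρQ u ^ ((n:ℝ) - q) := by
    filter_upwards [hAE] with u hu
    have := hφpos _ (div_pos (hρLpos u hu) (hρKpos u hu))
    have h1 := Real.rpow_pos_of_pos (hρKpos u hu) q
    have h2 := Real.rpow_pos_of_pos (hρQpos u hu) ((n:ℝ) - q)
    positivity
  rcases eq_or_lt_of_le hAnn with hA0 | hApos
  · -- degenerate case A = 0
    rw [ge_iff_le, hVqK, ← hA0]
    simp only [mul_zero, zero_mul]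
    rw [Vqφ]
    have : 0 ≤ ∫ u, φ (ρL u / ρK u) * ρK u ^ q * ρQ u ^ ((n:ℝ) - q) ∂smeas n :=
      integral_nonneg_of_ae hφw_nonneg
    positivity
  -- main case A > 0
  have hwInt : Integrable w μ := by
    by_contra hc
    rw [hAdef, integral_undef hc] at hApos
    exact lt_irrefl _ hApos
  -- sphere nonempty
  have hSne : S.Nonempty := by
    by_contra hc
    rw [not_nonempty_iff_eq_empty] at hc
    have : μ = 0 := by rw [hμres, hc, Measure.restrict_empty]
    rw [hAdef, this, integral_zero_measure] at hApos
    exact lt_irrefl _ hApos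
  -- min of w on S
  obtain ⟨u₀, hu₀S, hu₀⟩ := hScomp.exists_isMinOn hSne hwcont
  set εw : ℝ := w u₀ with hεw
  have hεwpos : 0 < εw := hwpos u₀ hu₀S
  -- finite measure
  have hfin : μ Set.univ < ⊤ := by
    have h1 : μ Set.univ = μH[(n : ℝ) - 1] S := by rw [hμres, Measure.restrict_apply_univ]
    have h2 : S ⊆ {x | εw ≤ w x} := fun x hx => hu₀ hx
    have h3 : μ {x | εw ≤ w x} < ⊤ := hwInt.measure_ge_lt_top hεwpos
    have h4 : μ S ≤ μ {x | εw ≤ w x} := measure_mono h2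
    have h5 : μ S = μH[(n : ℝ) - 1] S := by
      rw [hμres, Measure.restrict_apply hSmeas, Set.inter_self]
    rw [h1, ← h5]
    exact lt_of_le_of_lt h4 h3
  haveI : IsFiniteMeasure μ := ⟨hfin⟩
  -- integrability of continuous-on-S functions
  have key : ∀ h : Euc n → ℝ, ContinuousOn h S → Integrable h μ := by
    intro h hc
    obtain ⟨M, hM⟩ := hScomp.exists_bound_of_continuousOn hc
    have hmeas : AEStronglyMeasurable h μ := by
      rw [hμres]; exact hc.aestronglyMeasurable hSmeas
    refine Integrable.mono' (integrable_const M) hmeas ?_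
    filter_upwards [hAE] with u hu
    exact hM u hu
  have hgInt : Integrable g μ := key g hgcont
  have hfwInt : Integrable (fun u => f u * w u) μ := key _ (hfcont.mul hwcont)
  -- μ positive
  have hμpos : 0 < (μ Set.univ).toReal := by
    rcases eq_or_ne (μ Set.univ) 0 with h0 | h0
    · exfalso
      have : μ = 0 := Measure.measure_univ_eq_zero.mp h0
      rw [hAdef, this, integral_zero_measure] at hApos
      exact lt_irrefl _ hApos
    · exact ENNReal.toReal_pos h0 hfin.ne
  -- B > 0
  obtain ⟨v₀, hv₀S, hv₀⟩ := hScomp.exists_isMinOn hSne hgcont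
  have hεgpos : 0 < g v₀ := hgpos v₀ hv₀S
  have hBpos : 0 < B := by
    have h1 : ∫ u, (g v₀ : ℝ) ∂μ ≤ B := by
      apply integral_mono_ae (integrable_const _) hgInt
      filter_upwards [hAE] with u hu
      exact hv₀ hu
    rw [integral_const, smul_eq_mul] at h1
    nlinarith [show μ.real univ = (μ univ).toReal from rfl]
  set m : ℝ := B / A with hmdef
  have hm : 0 < m := div_pos hBpos hApos
  obtain ⟨a, ha⟩ := supporting_slope hconv hm
  -- ∫ f w = B
  have hfwB : ∫ u, f u * w u ∂μ = B := by
    rw [hBdef]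
    apply integral_congr_ae
    filter_upwards [hAE] with u hu
    have hKp := hρKpos u hu
    have hLp := hρLpos u hu
    rw [hfdef, hwdef, hgdef]
    simp only
    rw [Real.div_rpow hLp.le hKp.le]
    field_simp
  -- main pointwise inequality
  have hmain : ∫ u, (ψ m + a * (f u - m)) * w u ∂μ ≤
      ∫ u, φ (ρL u / ρK u) * ρK u ^ q * ρQ u ^ ((n:ℝ) - q) ∂μ := by
    apply integral_mono_ae
    · exact key _ (((continuousOn_const.add (continuousOn_const.mul
        (hfcont.sub continuousOn_const)))).mul hwcont)
    · refine key _ ?_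
      have hφ' : ContinuousOn (fun u => φ (ρL u / ρK u)) S :=
        hφc.comp hdivcont (fun u hu => div_pos (hρLpos u hu) (hρKpos u hu))
      exact (hφ'.mul (hρK.rpow_const (fun u hu => Or.inl (hρKpos u hu).ne'))).mul
        (hρQ.rpow_const (fun u hu => Or.inl (hρQpos u hu).ne'))
    · filter_upwards [hAE] with u hu
      have h1 : ψ m + a * (f u - m) ≤ ψ (f u) := ha _ (hfpos u hu)
      have h2 : φ (ρL u / ρK u) * ρK u ^ q * ρQ u ^ ((n:ℝ) - q) = ψ (f u) * w u := by
        rw [hpt u hu, hwdef]; ring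
      rw [h2]
      exact mul_le_mul_of_nonneg_right h1 (hwpos u hu).le
  -- compute left integral
  have hcomp : ∫ u, (ψ m + a * (f u - m)) * w u ∂μ = ψ m * A := by
    have hexp : ∀ u, (ψ m + a * (f u - m)) * w u = (ψ m - a * m) * w u + a * (f u * w u) := by
      intro u; ring
    rw [show (fun u => (ψ m + a * (f u - m)) * w u) =
        (fun u => (ψ m - a * m) * w u + a * (f u * w u)) from funext hexp]
    rw [integral_add (hwInt.const_mul _) (hfwInt.const_mul _),
      integral_const_mul, integral_const_mul, hfwB, ← hAdef]
    rw [hmdef]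
    field_simp
    ring
  -- assemble
  rw [ge_iff_le, Vqφ, hVqK, hVqL]
  have hratio : (1/(n:ℝ)) * B / ((1/(n:ℝ)) * A) = m := by
    rw [hmdef, mul_div_mul_left B A hn0]
  rw [hratio]
  have hfinal : ψ m * A ≤ ∫ u, φ (ρL u / ρK u) * ρK u ^ q * ρQ u ^ ((n:ℝ) - q) ∂smeas n := by
    rw [← hcomp]; exact hmain
  calc (1/(n:ℝ)) * A * φ (m ^ (1/q)) = (1/(n:ℝ)) * (ψ m * A) := by rw [hψdef]; ring
    _ ≤ (1/(n:ℝ)) * ∫ u, φ (ρL u / ρK u) * ρK u ^ q * ρQ u ^ ((n:ℝ) - q) ∂smeas n := by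
        apply mul_le_mul_of_nonneg_left hfinal (by positivity)
end
end

section
/- Let n ≥ 2, q ≠ 0, let φ:(0,∞)→(0,∞) be continuous with φ_q(t) := φ(t^{1/q}) concave on (0,∞), and let ρ_K, ρ_L, ρ_Q ∈ C(S^{n-1}) be strictly positive. Then Ṽ_{q,φ}(K,L,Q) ≤ Ṽ_q(K,Q) · φ((Ṽ_q(L,Q)/Ṽ_q(K,Q))^{1/q}), where Ṽ_q(K,Q) = (1/n)∫ ρ_K^q ρ_Q^{n-q} du and Ṽ_{q,φ}(K,L,Q) = (1/n)∫ φ(ρ_L/ρ_K) ρ_K^q ρ_Q^{n-q} du. -/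
open MeasureTheory Metric Set Filter
open scoped RealInnerProductSpace NNReal ENNReal Topology

noncomputable section

/-! ### Auxiliary geometric lemmas -/

def emk {k : ℕ} (f : Fin k → ℝ) : Euc k := WithLp.toLp 2 f

@[simp] lemma emk_apply {k : ℕ} (f : Fin k → ℝ) (i : Fin k) : emk f i = f i := rfl

lemma norm_sq_euc {k : ℕ} (x : Euc k) : ‖x‖^2 = ∑ i, ‖x i‖^2 := PiLp.norm_sq_eq_of_L2 _ x

lemma norm_snoc {m : ℕ} (y : Euc m) (s : ℝ) : ‖emk (Fin.snoc y s)‖ = Real.sqrt (‖y‖^2 + s^2) := by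
  have h := norm_sq_euc (emk (Fin.snoc y s))
  rw [Fin.sum_univ_castSucc] at h
  simp only [emk_apply, Fin.snoc_castSucc, Fin.snoc_last] at h
  rw [← Real.sqrt_sq (norm_nonneg (emk (Fin.snoc y s))), h, norm_sq_euc y]
  simp

lemma abs_coord {k : ℕ} (x : Euc k) (i : Fin k) : |x i| ≤ ‖x‖ := by
  have h1 : |x i|^2 ≤ ‖x‖^2 := by
    rw [norm_sq_euc]
    calc |x i|^2 = ‖x i‖^2 := by simp
    _ ≤ ∑ j, ‖x j‖^2 := Finset.single_le_sum (f := fun j => ‖x j‖^2) (fun j _ => by positivity) (Finset.mem_univ i)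
  calc |x i| = Real.sqrt (|x i|^2) := (Real.sqrt_sq (abs_nonneg _)).symm
  _ ≤ Real.sqrt (‖x‖^2) := Real.sqrt_le_sqrt h1
  _ = ‖x‖ := Real.sqrt_sq (norm_nonneg _)

lemma dist_sq_euc {k : ℕ} (x y : Euc k) : dist x y ^2 = ∑ i, dist (x i) (y i)^2 := by
  rw [EuclideanSpace.dist_eq, Real.sq_sqrt (by positivity)]

lemma perm_isom {k : ℕ} (σ : Equiv.Perm (Fin k)) :
    Isometry (fun x : Euc k => emk (fun j => x (σ j))) := by
  intro x y
  show edist (emk (fun j => x (σ j))) (emk (fun j => y (σ j))) = edist x y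
  rw [edist_dist, edist_dist]
  congr 1
  have h := dist_sq_euc (emk (fun j => x (σ j))) (emk (fun j => y (σ j)))
  simp only [emk_apply] at h
  have h2 : ∑ i, dist (x (σ i)) (y (σ i))^2 = ∑ i, dist (x i) (y i)^2 :=
    Equiv.sum_comp σ (fun j => dist (x j) (y j)^2)
  have h3 := dist_sq_euc x y
  nlinarith [dist_nonneg (x := emk (fun j => x (σ j))) (y := emk (fun j => y (σ j))), dist_nonneg (x := x) (y := y)]

lemma proj_lip {m : ℕ} : LipschitzWith 1 (fun x : Euc (m+1) => emk (fun j => x j.castSucc)) := by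
  apply LipschitzWith.of_dist_le_mul
  intro x y
  rw [NNReal.coe_one, one_mul]
  have h1 := dist_sq_euc (emk (fun j => x j.castSucc)) (emk (fun j => y j.castSucc))
  simp only [emk_apply] at h1
  have h3 := dist_sq_euc x y
  rw [Fin.sum_univ_castSucc (f := fun i => dist (x i) (y i) ^ 2)] at h3
  nlinarith [dist_nonneg (x := emk (fun j : Fin m => x j.castSucc)) (y := emk (fun j : Fin m => y j.castSucc)), dist_nonneg (x := x) (y := y), sq_nonneg (dist (x (Fin.last m)) (y (Fin.last m)))]

lemma snoc_lip {m : ℕ} (s : ℝ) : LipschitzWith 1 (fun y : Euc m => emk (Fin.snoc y s)) := by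
  apply LipschitzWith.of_dist_le_mul
  intro x y
  rw [NNReal.coe_one, one_mul]
  have h1 := dist_sq_euc (emk (Fin.snoc x s)) (emk (Fin.snoc y s))
  rw [Fin.sum_univ_castSucc] at h1
  simp only [emk_apply, Fin.snoc_castSucc, Fin.snoc_last, dist_self] at h1
  have h3 := dist_sq_euc x y
  nlinarith [dist_nonneg (x := emk (Fin.snoc x s)) (y := emk (Fin.snoc y s)), dist_nonneg (x := x) (y := y)]

lemma norm_aux {E : Type*} [NormedAddCommGroup E] [NormedSpace ℝ E]
    {x y : E} (hx : 1 ≤ ‖x‖) (hy : 1 ≤ ‖y‖) (hxy : ‖y‖ ≤ ‖x‖) :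
    ‖‖x‖⁻¹ • x - ‖y‖⁻¹ • y‖ ≤ 2 * ‖x - y‖ := by
  have hx0 : (0:ℝ) < ‖x‖ := lt_of_lt_of_le one_pos hx
  have hy0 : (0:ℝ) < ‖y‖ := lt_of_lt_of_le one_pos hy
  have key : ‖x‖⁻¹ • x - ‖y‖⁻¹ • y = ‖x‖⁻¹ • (x - y) + (‖x‖⁻¹ - ‖y‖⁻¹) • y := by
    rw [smul_sub, sub_smul]; abel
  rw [key]
  have h1 : ‖‖x‖⁻¹ • (x - y)‖ ≤ ‖x - y‖ := by
    rw [norm_smul, Real.norm_eq_abs, abs_of_pos (inv_pos.2 hx0)]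
    calc ‖x‖⁻¹ * ‖x - y‖ ≤ 1 * ‖x - y‖ := by
          gcongr
          exact inv_le_one_of_one_le₀ hx
    _ = ‖x - y‖ := one_mul _
  have h2 : ‖(‖x‖⁻¹ - ‖y‖⁻¹) • y‖ ≤ ‖x - y‖ := by
    rw [norm_smul, Real.norm_eq_abs]
    have hle : ‖x‖⁻¹ ≤ ‖y‖⁻¹ := by gcongr
    rw [abs_of_nonpos (by linarith)]
    have he : (-(‖x‖⁻¹ - ‖y‖⁻¹)) * ‖y‖ = (‖x‖ - ‖y‖) / ‖x‖ := by
      field_simp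
      ring
    rw [he]
    have hsub : ‖x‖ - ‖y‖ ≤ ‖x - y‖ := by
      linarith [abs_le.1 (abs_norm_sub_norm_le x y)]
    calc (‖x‖ - ‖y‖) / ‖x‖ ≤ ‖x - y‖ / ‖x‖ := by gcongr
    _ ≤ ‖x - y‖ / 1 := by
        apply div_le_div_of_nonneg_left (norm_nonneg _) one_pos hx
    _ = ‖x - y‖ := div_one _
  calc ‖‖x‖⁻¹ • (x - y) + (‖x‖⁻¹ - ‖y‖⁻¹) • y‖
      ≤ ‖‖x‖⁻¹ • (x - y)‖ + ‖(‖x‖⁻¹ - ‖y‖⁻¹) • y‖ := norm_add_le _ _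
  _ ≤ 2 * ‖x - y‖ := by linarith

lemma lips_normalize {E : Type*} [NormedAddCommGroup E] [NormedSpace ℝ E] :
    LipschitzOnWith 2 (fun x : E => ‖x‖⁻¹ • x) {x : E | 1 ≤ ‖x‖} := by
  rw [lipschitzOnWith_iff_dist_le_mul]
  intro x hx y hy
  simp only [dist_eq_norm, NNReal.coe_ofNat]
  rcases le_total ‖y‖ ‖x‖ with h | h
  · exact norm_aux hx hy h
  · rw [norm_sub_rev, norm_sub_rev x y]
    exact norm_aux hy hx h

lemma haar_euc (m : ℕ) : (μH[(m:ℝ)] : Measure (Euc m)).IsAddHaarMeasure := by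
  have h : ((Module.finrank ℝ (Euc m) : ℕ) : ℝ) = (m:ℝ) := by simp
  rw [← h]
  infer_instance

lemma sphere_pos (m : ℕ) : 0 < μH[(m:ℝ)] (sphere (0 : Euc (m+1)) 1) := by
  haveI := haar_euc m
  have hsub : closedBall (0 : Euc m) 1 ⊆ (fun x : Euc (m+1) => emk (fun j => x j.castSucc)) '' (sphere 0 1) := by
    intro y hy
    rw [mem_closedBall, dist_zero_right] at hy
    have hy2 : ‖y‖^2 ≤ 1 := by nlinarith [norm_nonneg y]
    refine ⟨emk (Fin.snoc y (Real.sqrt (1 - ‖y‖^2))), ?_, ?_⟩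
    · rw [mem_sphere_zero_iff_norm, norm_snoc, Real.sq_sqrt (by linarith)]
      simp
    · ext j
      simp [Fin.snoc_castSucc]
  have h1 : μH[(m:ℝ)] ((fun x : Euc (m+1) => emk (fun j => x j.castSucc)) '' (sphere 0 1))
      ≤ ((1:ℝ≥0) : ℝ≥0∞) ^ (m:ℝ) * μH[(m:ℝ)] (sphere (0 : Euc (m+1)) 1) :=
    proj_lip.hausdorffMeasure_image_le (by positivity) _
  have h2 : (0:ℝ≥0∞) < μH[(m:ℝ)] (closedBall (0 : Euc m) 1) := by
    have := measure_ball_pos (μH[(m:ℝ)] : Measure (Euc m)) (0 : Euc m) one_pos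
    exact lt_of_lt_of_le this (measure_mono ball_subset_closedBall)
  have h3 := lt_of_lt_of_le h2 (measure_mono hsub)
  have h4 := lt_of_lt_of_le h3 h1
  simpa using h4

lemma sphere_fin_s6 (m : ℕ) : μH[(m:ℝ)] (sphere (0 : Euc (m+1)) 1) < ⊤ := by
  classical
  haveI := haar_euc m
  set N := fun x : Euc (m+1) => ‖x‖⁻¹ • x with hN
  set T := fun (i : Fin (m+1)) (x : Euc (m+1)) => emk (fun j => x (Equiv.swap i (Fin.last m) j)) with hT
  set F := fun (s : ℝ) (y : Euc m) => emk (Fin.snoc y s) with hF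
  set B : Set (Euc m) := closedBall 0 ((m:ℝ)+1) with hB
  set g := fun (i : Fin (m+1)) (s : ℝ) (y : Euc m) => T i (N (F s y)) with hg
  have cover : sphere (0 : Euc (m+1)) 1 ⊆ ⋃ i : Fin (m+1), (g i 1 '' B ∪ g i (-1) '' B) := by
    intro u hu
    rw [mem_sphere_zero_iff_norm] at hu
    obtain ⟨i, -, hi⟩ := Finset.exists_max_image Finset.univ (fun j => |u j|) ⟨0, Finset.mem_univ 0⟩
    simp only [Finset.mem_univ, forall_true_left] at hi
    have hui : u i ≠ 0 := by
      intro h0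
      have h2 : ∀ j, u j = 0 := by
        intro j
        have := hi j
        rw [h0] at this
        simpa using abs_nonpos_iff.mp (by simpa using this)
      have h3 : u = 0 := by ext j; simpa using h2 j
      rw [h3] at hu
      simp at hu
    have hai : 0 < |u i| := abs_pos.mpr hui
    set c := |u i|⁻¹ with hc
    have hc0 : 0 < c := inv_pos.mpr hai
    set v := emk (fun j => u (Equiv.swap i (Fin.last m) j)) with hv
    have hvnorm : ‖v‖ = 1 := by
      have h := (perm_isom (Equiv.swap i (Fin.last m))).dist_eq u 0
      have h0 : emk (fun j => (0 : Euc (m+1)) (Equiv.swap i (Fin.last m) j)) = 0 := by ext j; simp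
      rw [h0] at h
      rw [← dist_zero_right, ← hu, ← dist_zero_right]
      exact h
    have hvj : ∀ j, |v j| ≤ |u i| := fun j => hi (Equiv.swap i (Fin.last m) j)
    have hvlast : v (Fin.last m) = u i := by
      simp only [hv, emk_apply]
      rw [Equiv.swap_apply_right]
    set y := emk (fun j : Fin m => c * v j.castSucc) with hy
    set s := c * u i with hs
    have hsval : s = 1 ∨ s = -1 := by
      rcases hui.lt_or_gt with h | h
      · right; rw [hs, hc, abs_of_neg h]; field_simp
      · left; rw [hs, hc, abs_of_pos h]; field_simp
    have hFy : F s y = c • v := by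
      ext j
      simp only [hF, emk_apply]
      refine Fin.lastCases ?_ ?_ j
      · rw [Fin.snoc_last]
        simp only [PiLp.smul_apply, smul_eq_mul, hvlast, hs]
      · intro j'
        rw [Fin.snoc_castSucc]
        simp only [hy, emk_apply, PiLp.smul_apply, smul_eq_mul]
    have hymem : y ∈ B := by
      rw [hB, mem_closedBall, dist_zero_right]
      have hsq : ‖y‖^2 ≤ (m:ℝ) := by
        rw [norm_sq_euc]
        calc ∑ j : Fin m, ‖y j‖^2 ≤ ∑ j : Fin m, 1 := by
              apply Finset.sum_le_sum
              intro j _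
              have h1 : |y j| ≤ 1 := by
                simp only [hy, emk_apply, abs_mul, abs_of_pos hc0]
                calc c * |v j.castSucc| ≤ c * |u i| := by
                      apply mul_le_mul_of_nonneg_left (hvj _) (le_of_lt hc0)
                _ = 1 := by rw [hc]; exact inv_mul_cancel₀ (ne_of_gt hai)
              have h2 : (0:ℝ) ≤ |y j| := abs_nonneg _
              calc ‖y j‖^2 = |y j|^2 := by rw [Real.norm_eq_abs]
              _ ≤ 1 := by nlinarith
        _ = (m:ℝ) := by simp
      nlinarith [norm_nonneg y, Nat.cast_nonneg (α := ℝ) m]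
    have hNc : N (c • v) = v := by
      simp only [hN]
      rw [norm_smul, Real.norm_eq_abs, abs_of_pos hc0, hvnorm, mul_one, smul_smul,
        inv_mul_cancel₀ (ne_of_gt hc0), one_smul]
    have hTu : T i v = u := by
      ext j
      simp only [hT, hv, emk_apply]
      rw [Equiv.swap_apply_self]
    have hgu : g i s y = u := by
      rw [hg]
      simp only
      rw [hFy, hNc, hTu]
    rcases hsval with h | h
    · rw [h] at hgu
      exact mem_iUnion.mpr ⟨i, Or.inl ⟨y, hymem, hgu⟩⟩
    · rw [h] at hgu
      exact mem_iUnion.mpr ⟨i, Or.inr ⟨y, hymem, hgu⟩⟩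
  have hB_lt : μH[(m:ℝ)] B < ⊤ := (isCompact_closedBall _ _).measure_lt_top
  have piece : ∀ (i : Fin (m+1)) (s : ℝ), 1 ≤ |s| → μH[(m:ℝ)] (g i s '' B) < ⊤ := by
    intro i s hsabs
    have hlipF : LipschitzWith 1 (F s) := snoc_lip s
    have hlipT : LipschitzWith 1 (T i) := (perm_isom _).lipschitz
    have hmaps : MapsTo (F s) B {x : Euc (m+1) | 1 ≤ ‖x‖} := by
      intro y _
      have h1 := abs_coord (F s y) (Fin.last m)
      have h2 : F s y (Fin.last m) = s := by
        simp only [hF, emk_apply]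
        exact Fin.snoc_last _ _
      rw [h2] at h1
      exact mem_setOf.mpr (le_trans hsabs h1)
    have hcomp1 : LipschitzOnWith (2 * 1) (N ∘ (F s)) B :=
      lips_normalize.comp (hlipF.lipschitzOnWith) hmaps
    have hcomp2 : LipschitzOnWith (1 * (2 * 1)) ((T i) ∘ (N ∘ (F s))) B :=
      (hlipT.lipschitzOnWith).comp hcomp1 (mapsTo_univ _ _)
    have himg : g i s '' B = ((T i) ∘ (N ∘ (F s))) '' B := rfl
    have hle := hcomp2.hausdorffMeasure_image_le (d := (m:ℝ)) (by positivity)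
    rw [← himg] at hle
    refine lt_of_le_of_lt hle (ENNReal.mul_lt_top ?_ hB_lt)
    exact ENNReal.rpow_lt_top_of_nonneg (by positivity) (by simp)
  calc μH[(m:ℝ)] (sphere (0 : Euc (m+1)) 1)
      ≤ μH[(m:ℝ)] (⋃ i : Fin (m+1), (g i 1 '' B ∪ g i (-1) '' B)) := measure_mono cover
  _ ≤ ∑' i : Fin (m+1), μH[(m:ℝ)] (g i 1 '' B ∪ g i (-1) '' B) := measure_iUnion_le _
  _ < ⊤ := by
      rw [tsum_fintype]
      rw [ENNReal.sum_lt_top]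
      intro i _
      refine lt_of_le_of_lt (measure_union_le _ _) (ENNReal.add_lt_top.mpr ⟨?_, ?_⟩)
      · exact piece i 1 (by norm_num)
      · exact piece i (-1) (by norm_num)

lemma integrable_of_contOn {n : ℕ} {μ' : Measure (Euc n)} [IsFiniteMeasure μ']
    {f : Euc n → ℝ} (hf : ContinuousOn f (usphere n))
    (hasm : AEStronglyMeasurable f μ')
    (hae : ∀ᵐ u ∂μ', u ∈ usphere n) : Integrable f μ' := by
  obtain ⟨C, hC⟩ := (isCompact_sphere (0:Euc n) 1).exists_bound_of_continuousOn hf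
  refine ⟨hasm, HasFiniteIntegral.of_bounded (C := C) ?_⟩
  filter_upwards [hae] with u hu
  exact hC u hu

theorem stmt6 (n : ℕ) (hn : 2 ≤ n) (q : ℝ) (hq : q ≠ 0) (φ : ℝ → ℝ)
    (hφc : ContinuousOn φ (Ioi 0)) (hφpos : ∀ t > (0:ℝ), 0 < φ t)
    (hconc : ConcaveOn ℝ (Ioi 0) (fun t : ℝ => φ (t ^ (1/q))))
    (ρK ρL ρQ : Euc n → ℝ)
    (hρK : ContinuousOn ρK (usphere n)) (hρKpos : ∀ u ∈ usphere n, 0 < ρK u)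
    (hρL : ContinuousOn ρL (usphere n)) (hρLpos : ∀ u ∈ usphere n, 0 < ρL u)
    (hρQ : ContinuousOn ρQ (usphere n)) (hρQpos : ∀ u ∈ usphere n, 0 < ρQ u)
 :
    Vqφ n q φ ρK ρL ρQ ≤ Vq n q ρK ρQ * φ ((Vq n q ρL ρQ / Vq n q ρK ρQ) ^ (1/q)) := by
  classical
  have hSm : MeasurableSet (usphere n) := (isClosed_sphere).measurableSet
  have hScomp : IsCompact (usphere n) := isCompact_sphere 0 1
  have hμ0fin : smeas n univ < ⊤ := by
    obtain ⟨m, rfl⟩ : ∃ m, n = m + 1 := ⟨n - 1, by omega⟩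
    rw [smeas, Measure.restrict_apply_univ]
    rw [show ((m+1:ℕ):ℝ) - 1 = (m:ℝ) by push_cast; ring]
    exact sphere_fin_s6 m
  have hμ0pos : 0 < smeas n univ := by
    obtain ⟨m, rfl⟩ : ∃ m, n = m + 1 := ⟨n - 1, by omega⟩
    rw [smeas, Measure.restrict_apply_univ]
    rw [show ((m+1:ℕ):ℝ) - 1 = (m:ℝ) by push_cast; ring]
    exact sphere_pos m
  haveI : IsFiniteMeasure (smeas n) := ⟨hμ0fin⟩
  have haeS0 : ∀ᵐ u ∂smeas n, u ∈ usphere n := ae_restrict_mem hSm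
  have hSne : (usphere n).Nonempty := by
    obtain ⟨m, rfl⟩ : ∃ m, n = m + 1 := ⟨n - 1, by omega⟩
    refine ⟨emk (Fin.snoc (0 : Euc m) 1), ?_⟩
    show _ ∈ sphere _ _
    rw [mem_sphere_zero_iff_norm, norm_snoc]
    simp
  set w : Euc n → ℝ := fun u => ρK u ^ q * ρQ u ^ ((n:ℝ) - q) with hw
  set f : Euc n → ℝ := fun u => (ρL u / ρK u) ^ q with hf
  set gφ : ℝ → ℝ := fun t : ℝ => φ (t ^ (1/q)) with hgφ
  have hρKne : ∀ u ∈ usphere n, ρK u ≠ 0 := fun u hu => ne_of_gt (hρKpos u hu)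
  have hwcont : ContinuousOn w (usphere n) :=
    (hρK.rpow_const (fun u hu => Or.inl (hρKne u hu))).mul
      (hρQ.rpow_const (fun u hu => Or.inl (ne_of_gt (hρQpos u hu))))
  have hwpos : ∀ u ∈ usphere n, 0 < w u := fun u hu =>
    mul_pos (Real.rpow_pos_of_pos (hρKpos u hu) q) (Real.rpow_pos_of_pos (hρQpos u hu) _)
  have hratiocont : ContinuousOn (fun u => ρL u / ρK u) (usphere n) := hρL.div hρK hρKne
  have hratiopos : ∀ u ∈ usphere n, 0 < ρL u / ρK u := fun u hu =>
    div_pos (hρLpos u hu) (hρKpos u hu)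
  have hfcont : ContinuousOn f (usphere n) :=
    hratiocont.rpow_const (fun u hu => Or.inl (ne_of_gt (hratiopos u hu)))
  have hfpos : ∀ u ∈ usphere n, 0 < f u := fun u hu =>
    Real.rpow_pos_of_pos (hratiopos u hu) q
  obtain ⟨a, haS, hamin⟩ := hScomp.exists_isMinOn hSne hfcont
  obtain ⟨b, hbS, hbmax⟩ := hScomp.exists_isMaxOn hSne hfcont
  set cl := f a with hcl
  set cu := f b with hcu
  have hcl0 : 0 < cl := hfpos a haS
  have hIcc : ∀ u ∈ usphere n, f u ∈ Icc cl cu := fun u hu => ⟨hamin hu, hbmax hu⟩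
  set wnn : Euc n → ℝ≥0 := fun u => Real.toNNReal (w u) with hwnn
  have hwmeas : AEMeasurable wnn (smeas n) :=
    measurable_real_toNNReal.comp_aemeasurable (hwcont.aemeasurable hSm)
  set μ : Measure (Euc n) := (smeas n).withDensity (fun u => (wnn u : ℝ≥0∞)) with hμ
  have hac : μ ≪ smeas n := withDensity_absolutelyContinuous _ _
  have haeS : ∀ᵐ u ∂μ, u ∈ usphere n := haeS0.filter_mono hac.ae_le
  have hwint : Integrable w (smeas n) :=
    integrable_of_contOn hwcont (hwcont.aestronglyMeasurable hSm) haeS0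
  set IK := ∫ u, ρK u ^ q * ρQ u ^ ((n:ℝ) - q) ∂smeas n with hIK
  have hIKw : IK = ∫ u, w u ∂smeas n := rfl
  have hμuniv : μ univ = ENNReal.ofReal IK := by
    rw [hμ, withDensity_apply _ MeasurableSet.univ, Measure.restrict_univ]
    rw [hIKw, ofReal_integral_eq_lintegral_ofReal hwint
      (haeS0.mono fun u hu => (hwpos u hu).le)]
    rfl
  have hμne : μ univ ≠ 0 := by
    rw [hμ, withDensity_apply _ MeasurableSet.univ, Measure.restrict_univ]
    obtain ⟨aw, hawS, hawmin⟩ := hScomp.exists_isMinOn hSne hwcont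
    have hcw : 0 < w aw := hwpos aw hawS
    have hlow : ENNReal.ofReal (w aw) * smeas n univ ≤ ∫⁻ u, (wnn u : ℝ≥0∞) ∂smeas n := by
      rw [← lintegral_const]
      apply lintegral_mono_ae
      filter_upwards [haeS0] with u hu
      rw [hwnn]
      simp only [ENNReal.ofReal]
      exact ENNReal.coe_le_coe.mpr (Real.toNNReal_mono (hawmin hu))
    have : 0 < ENNReal.ofReal (w aw) * smeas n univ :=
      ENNReal.mul_pos (ne_of_gt (ENNReal.ofReal_pos.mpr hcw)) (ne_of_gt hμ0pos)
    exact ne_of_gt (lt_of_lt_of_le this hlow)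
  have hμfin : IsFiniteMeasure μ := by
    constructor
    rw [hμuniv]
    exact ENNReal.ofReal_lt_top
  haveI := hμfin
  haveI : NeZero μ := ⟨Measure.measure_univ_ne_zero.mp hμne⟩
  have hIKpos : 0 < IK := by
    by_contra h
    push_neg at h
    rw [hμuniv] at hμne
    exact hμne (by simp [ENNReal.ofReal_eq_zero.mpr h])
  have htoReal : (μ univ).toReal = IK := by rw [hμuniv, ENNReal.toReal_ofReal hIKpos.le]
  have hIW : ∀ h : Euc n → ℝ, ∫ u, h u ∂μ = ∫ u, (wnn u : ℝ) * h u ∂smeas n := by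
    intro h
    rw [hμ, integral_withDensity_eq_integral_smul₀ hwmeas h]
    rfl
  set IL := ∫ u, ρL u ^ q * ρQ u ^ ((n:ℝ) - q) ∂smeas n with hIL
  set Iφ := ∫ u, φ (ρL u / ρK u) * ρK u ^ q * ρQ u ^ ((n:ℝ) - q) ∂smeas n with hIφ
  have hIf : ∫ u, f u ∂μ = IL := by
    rw [hIW f, hIL]
    apply integral_congr_ae
    filter_upwards [haeS0] with u hu
    have hKq : ρK u ^ q ≠ 0 := ne_of_gt (Real.rpow_pos_of_pos (hρKpos u hu) q)
    rw [hwnn]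
    simp only [Real.coe_toNNReal _ (hwpos u hu).le]
    rw [hw, hf]
    simp only
    rw [Real.div_rpow (hρLpos u hu).le (hρKpos u hu).le]
    field_simp
  have hIgf : ∫ u, gφ (f u) ∂μ = Iφ := by
    rw [hIW (fun u => gφ (f u)), hIφ]
    apply integral_congr_ae
    filter_upwards [haeS0] with u hu
    rw [hwnn]
    simp only [Real.coe_toNNReal _ (hwpos u hu).le]
    rw [hgφ, hf, hw]
    simp only
    rw [one_div, Real.rpow_rpow_inv (hratiopos u hu).le hq]
    ring
  have hgφcont : ContinuousOn gφ (Icc cl cu) := by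
    apply hφc.comp
    · exact continuousOn_id.rpow_const (fun t ht => Or.inl (ne_of_gt (lt_of_lt_of_le hcl0 ht.1)))
    · intro t ht
      exact mem_Ioi.mpr (Real.rpow_pos_of_pos (lt_of_lt_of_le hcl0 ht.1) _)
  have hgfcont : ContinuousOn (fun u => gφ (f u)) (usphere n) :=
    hgφcont.comp hfcont (fun u hu => hIcc u hu)
  have hfint : Integrable f μ :=
    integrable_of_contOn hfcont ((hfcont.aestronglyMeasurable hSm).mono_ac hac) haeS
  have hgfint : Integrable (gφ ∘ f) μ :=
    integrable_of_contOn hgfcont ((hgfcont.aestronglyMeasurable hSm).mono_ac hac) haeS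
  have hconcIcc : ConcaveOn ℝ (Icc cl cu) gφ :=
    hconc.subset (fun t ht => lt_of_lt_of_le hcl0 ht.1) (convex_Icc _ _)
  have hmem : ∀ᵐ x ∂μ, f x ∈ Icc cl cu := haeS.mono fun u hu => hIcc u hu
  have hJ := hconcIcc.le_map_average hgφcont isClosed_Icc hmem hfint hgfint
  rw [average_eq, average_eq, hIf, hIgf, measureReal_def, htoReal] at hJ
  simp only [smul_eq_mul] at hJ
  have hn0 : (0:ℝ) < n := by positivity
  have hVL : Vq n q ρL ρQ = (1/(n:ℝ)) * IL := by rw [hIL]; rfl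
  have hVK : Vq n q ρK ρQ = (1/(n:ℝ)) * IK := by rw [hIK]; rfl
  have hVKfrac : Vq n q ρL ρQ / Vq n q ρK ρQ = IK⁻¹ * IL := by
    rw [hVL, hVK, mul_div_mul_left _ _ (by positivity : (1/(n:ℝ)) ≠ 0), div_eq_inv_mul]
  have hfinal : Iφ ≤ IK * gφ (IK⁻¹ * IL) := (inv_mul_le_iff₀ hIKpos).mp hJ
  have hVφ : Vqφ n q φ ρK ρL ρQ = (1/(n:ℝ)) * Iφ := by rw [hIφ]; rfl
  rw [hVφ, hVKfrac, hVK]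
  calc (1/(n:ℝ)) * Iφ ≤ (1/(n:ℝ)) * (IK * gφ (IK⁻¹ * IL)) := by
        apply mul_le_mul_of_nonneg_left hfinal (by positivity)
  _ = 1/(n:ℝ) * IK * φ ((IK⁻¹ * IL) ^ (1/q)) := by rw [hgφ]; ring
end
end

section
/- Let n ≥ 2, q ≠ 0, let φ:(0,∞)→(0,∞) be continuous with φ_q(t) := φ(t^{1/q}) strictly convex on (0,∞), and let ρ_K, ρ_L, ρ_Q ∈ C(S^{n-1}) be strictly positive. If equality holds in the dual Orlicz–Minkowski inequality Ṽ_{q,φ}(K,L,Q) = Ṽ_q(K,Q) · φ((Ṽ_q(L,Q)/Ṽ_q(K,Q))^{1/q}), then there is a constant c > 0 such that ρ_L(u) = c ρ_K(u) for all u ∈ S^{n-1}. -/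
open MeasureTheory Metric Set Filter
open scoped RealInnerProductSpace NNReal ENNReal Topology

noncomputable section

open Module

set_option maxHeartbeats 1000000

section Geometry

variable {n : ℕ}

/-- The orthogonal projection onto the hyperplane perpendicular to `u₁`. -/
def projv (u₁ : Euc n) (x : Euc n) : Euc n := x - ⟪x, u₁⟫ • u₁

lemma projv_lipschitz {u₁ : Euc n} (hu₁ : ‖u₁‖ = 1) : LipschitzWith 1 (projv u₁) := by
  apply LipschitzWith.of_dist_le_mul
  intro x y
  have hxy : projv u₁ x - projv u₁ y = (x - y) - ⟪x - y, u₁⟫ • u₁ := by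
    simp only [projv, inner_sub_left, sub_smul]
    abel
  rw [dist_eq_norm, dist_eq_norm, hxy, NNReal.coe_one, one_mul]
  set z := x - y
  have h1 : ‖z - ⟪z, u₁⟫ • u₁‖ ^ 2 = ‖z‖ ^ 2 - ⟪z, u₁⟫ ^ 2 := by
    rw [norm_sub_sq_real, real_inner_smul_right, norm_smul, Real.norm_eq_abs, hu₁]
    ring_nf
    rw [sq_abs]
    ring
  have h2 : ‖z - ⟪z, u₁⟫ • u₁‖ ^ 2 ≤ ‖z‖ ^ 2 := by nlinarith [sq_nonneg (⟪z, u₁⟫)]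
  nlinarith [norm_nonneg (z - ⟪z, u₁⟫ • u₁), norm_nonneg z]

lemma projv_mem_orth {u₁ : Euc n} (hu₁ : ‖u₁‖ = 1) (x : Euc n) :
    projv u₁ x ∈ (Submodule.span ℝ {u₁})ᗮ := by
  rw [Submodule.mem_orthogonal_singleton_iff_inner_right]
  have h11 : ⟪u₁, u₁⟫ = 1 := by
    rw [real_inner_self_eq_norm_sq, hu₁]; norm_num
  rw [projv, inner_sub_right, real_inner_smul_right, h11, mul_one, real_inner_comm, sub_self]

lemma sphere_cast (hn : 1 ≤ n) : ((n : ℝ) - 1) = ((n - 1 : ℕ) : ℝ) := by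
  have : (1:ℕ) ≤ n := hn
  push_cast [Nat.cast_sub this]
  ring

/-- Positivity of `μH[n-1]` on spherical caps. -/
lemma cap_pos (hn : 2 ≤ n) {u₁ : Euc n} (hu₁ : u₁ ∈ usphere n) {r : ℝ} (hr : 0 < r) :
    0 < μH[(n : ℝ) - 1] (usphere n ∩ ball u₁ r) := by
  have hu₁n : ‖u₁‖ = 1 := by
    simpa [usphere, mem_sphere_iff_norm] using hu₁
  have hu₁0 : u₁ ≠ 0 := by
    intro h; rw [h, norm_zero] at hu₁n; norm_num at hu₁n
  set P : Submodule ℝ (Euc n) := (Submodule.span ℝ {u₁})ᗮ with hP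
  haveI : Fact (finrank ℝ (Euc n) = (n - 1) + 1) := ⟨by
    rw [finrank_euclideanSpace, Fintype.card_fin]; omega⟩
  have hfr : finrank ℝ P = n - 1 := Submodule.finrank_orthogonal_span_singleton hu₁0
  set δ : ℝ := min (r / 2) (1 / 2) with hδ
  have hδpos : 0 < δ := by positivity
  have hδr : δ ≤ r / 2 := min_le_left _ _
  have hδhalf : δ ≤ 1 / 2 := min_le_right _ _
  -- the ball in P embeds into the projection of the cap
  have key : ((↑) : P → Euc n) '' (ball (0 : P) δ) ⊆
      projv u₁ '' (usphere n ∩ ball u₁ r) := by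
    rintro - ⟨v, hv, rfl⟩
    have hvP : ⟪u₁, (v : Euc n)⟫ = 0 :=
      Submodule.mem_orthogonal_singleton_iff_inner_right.1 v.2
    have hvu : ⟪(v : Euc n), u₁⟫ = 0 := by rw [real_inner_comm]; exact hvP
    have hvn : ‖(v : Euc n)‖ < δ := by
      have := mem_ball_zero_iff.1 hv
      rwa [Submodule.coe_norm] at this
    have hvn1 : ‖(v : Euc n)‖ ≤ 1 / 2 := le_trans hvn.le hδhalf
    set t : ℝ := Real.sqrt (1 - ‖(v : Euc n)‖ ^ 2) with ht
    have h1v : (0:ℝ) ≤ 1 - ‖(v : Euc n)‖ ^ 2 := by nlinarith [norm_nonneg (v : Euc n)]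
    have ht2 : t ^ 2 = 1 - ‖(v : Euc n)‖ ^ 2 := Real.sq_sqrt h1v
    have ht0 : 0 ≤ t := Real.sqrt_nonneg _
    have ht1 : t ≤ 1 := by nlinarith [norm_nonneg (v : Euc n)]
    set u : Euc n := (v : Euc n) + t • u₁ with hu
    have h11 : ⟪u₁, u₁⟫ = 1 := by
      rw [real_inner_self_eq_norm_sq, hu₁n]; norm_num
    have hinner : ⟪u, u₁⟫ = t := by
      rw [hu, inner_add_left, real_inner_smul_left, hvu, h11, mul_one, zero_add]
    have hun : ‖u‖ ^ 2 = 1 := by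
      rw [hu, norm_add_sq_real, real_inner_smul_right, hvu, norm_smul, Real.norm_eq_abs, hu₁n,
        abs_of_nonneg ht0]
      nlinarith
    have hu_sphere : u ∈ usphere n := by
      rw [usphere, mem_sphere_iff_norm, sub_zero]
      nlinarith [norm_nonneg u]
    have hdist : u ∈ ball u₁ r := by
      rw [mem_ball, dist_eq_norm]
      have huu : u - u₁ = (v : Euc n) + (t - 1) • u₁ := by
        rw [hu, sub_smul, one_smul]; abel
      have : ‖u - u₁‖ ^ 2 = ‖(v : Euc n)‖ ^ 2 + (t - 1) ^ 2 := by
        rw [huu, norm_add_sq_real, real_inner_smul_right, hvu, norm_smul, Real.norm_eq_abs, hu₁n]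
        ring_nf
        rw [sq_abs]
        ring
      have hle : ‖u - u₁‖ ^ 2 ≤ 2 * ‖(v : Euc n)‖ ^ 2 := by nlinarith
      have : ‖(v : Euc n)‖ < r / 2 := lt_of_lt_of_le hvn hδr
      nlinarith [norm_nonneg (u - u₁), norm_nonneg (v : Euc n)]
    refine ⟨u, ⟨hu_sphere, hdist⟩, ?_⟩
    rw [projv, hinner, hu]
    abel
  -- positivity of the ball in P
  have hd0 : (0:ℝ) ≤ (n:ℝ) - 1 := by
    have : (1:ℝ) ≤ (n:ℝ) := by exact_mod_cast le_trans (by norm_num) hn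
    linarith
  have hpos : 0 < μH[(n : ℝ) - 1] (((↑) : P → Euc n) '' (ball (0 : P) δ)) := by
    rw [isometry_subtype_coe.hausdorffMeasure_image (Or.inl hd0)]
    have hball : 0 < (μH[(finrank ℝ P : ℝ)] : Measure P) (ball 0 δ) :=
      measure_ball_pos _ _ hδpos
    rw [hfr] at hball
    rwa [sphere_cast (le_trans (by norm_num) hn)]
  have hmono : μH[(n : ℝ) - 1] (((↑) : P → Euc n) '' (ball (0 : P) δ)) ≤
      μH[(n : ℝ) - 1] (projv u₁ '' (usphere n ∩ ball u₁ r)) := measure_mono key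
  have hlip := (projv_lipschitz hu₁n).hausdorffMeasure_image_le
    (d := (n : ℝ) - 1) hd0 (usphere n ∩ ball u₁ r)
  calc (0:ℝ≥0∞) < _ := hpos
    _ ≤ _ := hmono
    _ ≤ (1:ℝ≥0) ^ ((n:ℝ)-1) * μH[(n : ℝ) - 1] (usphere n ∩ ball u₁ r) := hlip
    _ = μH[(n : ℝ) - 1] (usphere n ∩ ball u₁ r) := by
        rw [ENNReal.coe_one, ENNReal.one_rpow, one_mul]

end Geometry

section Finiteness

variable {n : ℕ}

lemma norm_projv_sq {u₁ : Euc n} (hu₁ : ‖u₁‖ = 1) (x : Euc n) :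
    ‖projv u₁ x‖ ^ 2 = ‖x‖ ^ 2 - ⟪x, u₁⟫ ^ 2 := by
  rw [projv, norm_sub_sq_real, real_inner_smul_right, norm_smul, Real.norm_eq_abs, hu₁]
  ring_nf
  rw [sq_abs]
  ring

lemma sqrt_lip {x y : Euc n} (hx : ‖x‖ ≤ 1/2) (hy : ‖y‖ ≤ 1/2) :
    |Real.sqrt (1 - ‖x‖^2) - Real.sqrt (1 - ‖y‖^2)| ≤ ‖x - y‖ := by
  set A := 1 - ‖x‖^2 with hA
  set B := 1 - ‖y‖^2 with hB
  have hA0 : (0:ℝ) ≤ A := by nlinarith [norm_nonneg x]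
  have hB0 : (0:ℝ) ≤ B := by nlinarith [norm_nonneg y]
  set s := Real.sqrt A with hs
  set t := Real.sqrt B with ht
  have hs2 : s ^ 2 = A := Real.sq_sqrt hA0
  have ht2 : t ^ 2 = B := Real.sq_sqrt hB0
  have hs0 : 0 ≤ s := Real.sqrt_nonneg _
  have ht0 : 0 ≤ t := Real.sqrt_nonneg _
  have hshalf : 1/2 ≤ s := by
    rw [hs]
    rw [Real.le_sqrt (by norm_num) hA0]
    nlinarith [norm_nonneg x]
  have hthalf : 1/2 ≤ t := by
    rw [ht]
    rw [Real.le_sqrt (by norm_num) hB0]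
    nlinarith [norm_nonneg y]
  have hAB : |A - B| ≤ ‖x - y‖ := by
    have h1 := (abs_le.1 (abs_norm_sub_norm_le x y)).1
    have h2 := (abs_le.1 (abs_norm_sub_norm_le x y)).2
    rw [abs_le]
    constructor <;> nlinarith [norm_nonneg x, norm_nonneg y, norm_nonneg (x - y)]
  have key : |s - t| ≤ |A - B| := by
    have hmul : (s - t) * (s + t) = A - B := by nlinarith
    rcases le_total t s with h | h
    · rw [abs_of_nonneg (by linarith)]
      have h1 : A - B ≤ |A - B| := le_abs_self _
      nlinarith [mul_nonneg (sub_nonneg.2 h) (by linarith : (0:ℝ) ≤ s + t - 1)]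
    · rw [abs_of_nonpos (by linarith)]
      have h1 : B - A ≤ |A - B| := by rw [abs_sub_comm]; exact le_abs_self _
      nlinarith [mul_nonneg (sub_nonneg.2 h) (by linarith : (0:ℝ) ≤ s + t - 1)]
  exact le_trans key hAB

lemma cap_finite (hn : 2 ≤ n) {u₁ : Euc n} (hu₁ : u₁ ∈ usphere n) :
    μH[(n:ℝ)-1] (usphere n ∩ ball u₁ (1/2)) < ⊤ := by
  have hu₁n : ‖u₁‖ = 1 := by
    simpa [usphere, mem_sphere_iff_norm] using hu₁
  have hu₁0 : u₁ ≠ 0 := by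
    intro h; rw [h, norm_zero] at hu₁n; norm_num at hu₁n
  have hd0 : (0:ℝ) ≤ (n:ℝ) - 1 := by
    have : (1:ℝ) ≤ (n:ℝ) := by exact_mod_cast le_trans (by norm_num) hn
    linarith
  set P : Submodule ℝ (Euc n) := (Submodule.span ℝ {u₁})ᗮ with hP
  haveI : Fact (finrank ℝ (Euc n) = (n - 1) + 1) := ⟨by
    rw [finrank_euclideanSpace, Fintype.card_fin]; omega⟩
  have hfr : finrank ℝ P = n - 1 := Submodule.finrank_orthogonal_span_singleton hu₁0
  set D : Set (Euc n) := ((↑) : P → Euc n) '' (closedBall (0 : P) (1/2)) with hD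
  have hDnorm : ∀ x ∈ D, ‖x‖ ≤ 1/2 := by
    rintro - ⟨p, hp, rfl⟩
    have := mem_closedBall_zero_iff.1 hp
    rwa [Submodule.coe_norm] at this
  set g : Euc n → Euc n := fun y => y + Real.sqrt (1 - ‖y‖^2) • u₁ with hg
  -- the cap is contained in the image of `D` under `g`
  have hsub : usphere n ∩ ball u₁ (1/2) ⊆ g '' D := by
    rintro u ⟨hus, hub⟩
    have hun : ‖u‖ = 1 := by simpa [usphere, mem_sphere_iff_norm] using hus
    set c := ⟪u, u₁⟫ with hc
    have hdist : ‖u - u₁‖ < 1/2 := by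
      have := mem_ball.1 hub; rwa [dist_eq_norm] at this
    have hdistsq : ‖u - u₁‖ ^ 2 = 2 - 2 * c := by
      rw [norm_sub_sq_real, hun, hu₁n]; ring
    have hcpos : 7/8 < c := by nlinarith [norm_nonneg (u - u₁)]
    set v := projv u₁ u with hv
    have hvsq : ‖v‖ ^ 2 = 1 - c ^ 2 := by
      rw [hv, norm_projv_sq hu₁n, hun]; ring
    have hvle : ‖v‖ ≤ 1/2 := by nlinarith [norm_nonneg v]
    have hvP : v ∈ P := projv_mem_orth hu₁n u
    refine ⟨v, ⟨⟨v, hvP⟩, ?_, rfl⟩, ?_⟩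
    · rw [mem_closedBall_zero_iff, Submodule.coe_norm]
      exact hvle
    · have hsqrt : Real.sqrt (1 - ‖v‖^2) = c := by
        rw [hvsq]
        have : (1:ℝ) - (1 - c^2) = c^2 := by ring
        rw [this, Real.sqrt_sq (by linarith)]
      rw [hg]
      simp only
      rw [hsqrt, hv, projv]
      abel
  -- `g` is Lipschitz on `D`
  have hlip : LipschitzOnWith 2 g D := by
    apply LipschitzOnWith.of_dist_le_mul
    intro x hx y hy
    have hgxy : g x - g y = (x - y) + (Real.sqrt (1 - ‖x‖^2) - Real.sqrt (1 - ‖y‖^2)) • u₁ := by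
      rw [hg]
      simp only
      rw [sub_smul]
      abel
    rw [dist_eq_norm, dist_eq_norm, hgxy]
    calc ‖(x - y) + (Real.sqrt (1 - ‖x‖^2) - Real.sqrt (1 - ‖y‖^2)) • u₁‖
        ≤ ‖x - y‖ + ‖(Real.sqrt (1 - ‖x‖^2) - Real.sqrt (1 - ‖y‖^2)) • u₁‖ := norm_add_le _ _
      _ = ‖x - y‖ + |Real.sqrt (1 - ‖x‖^2) - Real.sqrt (1 - ‖y‖^2)| := by
          rw [norm_smul, Real.norm_eq_abs, hu₁n, mul_one]
      _ ≤ ‖x - y‖ + ‖x - y‖ := by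
          have := sqrt_lip (hDnorm x hx) (hDnorm y hy)
          linarith
      _ = (2:ℝ≥0) * ‖x - y‖ := by
          push_cast
          ring
  -- conclude
  have hDfin : μH[(n:ℝ)-1] D < ⊤ := by
    rw [hD, isometry_subtype_coe.hausdorffMeasure_image (Or.inl hd0)]
    have hcb : (μH[(finrank ℝ P : ℝ)] : Measure P) (closedBall 0 (1/2)) < ⊤ :=
      (isCompact_closedBall _ _).measure_lt_top
    rw [hfr] at hcb
    rwa [sphere_cast (le_trans (by norm_num) hn)]
  calc μH[(n:ℝ)-1] (usphere n ∩ ball u₁ (1/2)) ≤ μH[(n:ℝ)-1] (g '' D) := measure_mono hsub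
    _ ≤ (2:ℝ≥0) ^ ((n:ℝ)-1) * μH[(n:ℝ)-1] D := hlip.hausdorffMeasure_image_le hd0
    _ < ⊤ := ENNReal.mul_lt_top (ENNReal.rpow_lt_top_of_nonneg hd0 ENNReal.coe_ne_top) hDfin

lemma sphere_finite (hn : 2 ≤ n) : μH[(n:ℝ)-1] (usphere n) < ⊤ := by
  have hcompact : IsCompact (usphere n) := isCompact_sphere 0 1
  obtain ⟨t, ht⟩ := hcompact.elim_finite_subcover
    (fun i : usphere n => ball (i : Euc n) (1/2)) (fun i => isOpen_ball)
    (fun u hu => mem_iUnion.2 ⟨⟨u, hu⟩, mem_ball_self (by norm_num)⟩)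
  have hsub : usphere n ⊆ ⋃ i ∈ t, usphere n ∩ ball (i : Euc n) (1/2) := by
    intro u hu
    obtain ⟨i, hit, hui⟩ := mem_iUnion₂.1 (ht hu)
    exact mem_iUnion₂.2 ⟨i, hit, hu, hui⟩
  calc μH[(n:ℝ)-1] (usphere n) ≤ μH[(n:ℝ)-1] (⋃ i ∈ t, usphere n ∩ ball (i : Euc n) (1/2)) :=
        measure_mono hsub
    _ ≤ ∑ i ∈ t, μH[(n:ℝ)-1] (usphere n ∩ ball (i : Euc n) (1/2)) :=
        measure_biUnion_finset_le t _
    _ < ⊤ := ENNReal.sum_lt_top.2 fun i _ => cap_finite hn i.2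

end Finiteness


theorem stmt7 (n : ℕ) (hn : 2 ≤ n) (q : ℝ) (hq : q ≠ 0) (φ : ℝ → ℝ)
    (hφc : ContinuousOn φ (Ioi 0)) (hφpos : ∀ t > (0:ℝ), 0 < φ t)
    (hconv : StrictConvexOn ℝ (Ioi 0) (fun t : ℝ => φ (t ^ (1/q))))
    (ρK ρL ρQ : Euc n → ℝ)
    (hρK : ContinuousOn ρK (usphere n)) (hρKpos : ∀ u ∈ usphere n, 0 < ρK u)
    (hρL : ContinuousOn ρL (usphere n)) (hρLpos : ∀ u ∈ usphere n, 0 < ρL u)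
    (hρQ : ContinuousOn ρQ (usphere n)) (hρQpos : ∀ u ∈ usphere n, 0 < ρQ u)
    (heq : Vqφ n q φ ρK ρL ρQ = Vq n q ρK ρQ * φ ((Vq n q ρL ρQ / Vq n q ρK ρQ) ^ (1/q))) :
    ∃ c : ℝ, 0 < c ∧ ∀ u ∈ usphere n, ρL u = c * ρK u := by
  classical
  have hS : MeasurableSet (usphere n) := isClosed_sphere.measurableSet
  set μ : Measure (Euc n) := smeas n with hμdef
  have hae_sphere : ∀ᵐ u ∂μ, u ∈ usphere n := ae_restrict_mem hS
  have hμuniv : μ univ = μH[(n:ℝ)-1] (usphere n) := by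
    rw [hμdef, smeas, Measure.restrict_apply_univ]
  haveI hμfin : IsFiniteMeasure μ := ⟨by rw [hμuniv]; exact sphere_finite hn⟩
  -- a point on the sphere
  have hnpos : 0 < n := by omega
  set e : Euc n := EuclideanSpace.single (⟨0, hnpos⟩ : Fin n) (1:ℝ) with he_def
  have he : e ∈ usphere n := by
    rw [usphere, mem_sphere_iff_norm, sub_zero, he_def, EuclideanSpace.norm_single]
    norm_num
  have hμpos : 0 < μ univ := by
    rw [hμuniv]
    have hsub : usphere n ∩ ball e 3 = usphere n := by
      apply inter_eq_self_of_subset_left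
      intro u hu
      have hu1 : ‖u‖ = 1 := by simpa [usphere, mem_sphere_iff_norm] using hu
      have he1 : ‖e‖ = 1 := by
        rw [he_def, EuclideanSpace.norm_single]; norm_num
      rw [mem_ball, dist_eq_norm]
      calc ‖u - e‖ ≤ ‖u‖ + ‖e‖ := norm_sub_le _ _
        _ < 3 := by rw [hu1, he1]; norm_num
    rw [← hsub]
    exact cap_pos hn he (by norm_num)
  have hcompact : IsCompact (usphere n) := isCompact_sphere 0 1
  have hne : (usphere n).Nonempty := ⟨e, he⟩
  -- the weight function
  set W : Euc n → ℝ := fun u => ρK u ^ q * ρQ u ^ ((n:ℝ) - q) with hW_def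
  have hWcont : ContinuousOn W (usphere n) :=
    (hρK.rpow_const (fun x hx => Or.inl (hρKpos x hx).ne')).mul
      (hρQ.rpow_const (fun x hx => Or.inl (hρQpos x hx).ne'))
  have hWpos : ∀ u ∈ usphere n, 0 < W u := fun u hu =>
    mul_pos (Real.rpow_pos_of_pos (hρKpos u hu) _) (Real.rpow_pos_of_pos (hρQpos u hu) _)
  -- the function F and the convex function G
  set F : Euc n → ℝ := fun u => (ρL u / ρK u) ^ q with hF_def
  set G : ℝ → ℝ := fun t => φ (t ^ (1/q)) with hG_def
  have hFcont : ContinuousOn F (usphere n) :=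
    (hρL.div hρK fun x hx => (hρKpos x hx).ne').rpow_const
      (fun x hx => Or.inl (div_pos (hρLpos x hx) (hρKpos x hx)).ne')
  have hFpos : ∀ u ∈ usphere n, 0 < F u := fun u hu =>
    Real.rpow_pos_of_pos (div_pos (hρLpos u hu) (hρKpos u hu)) _
  obtain ⟨x₀, hx₀s, hx₀'⟩ := hcompact.exists_isMinOn hne hFcont
  obtain ⟨x₁, hx₁s, hx₁'⟩ := hcompact.exists_isMaxOn hne hFcont
  have hx₀ : ∀ y ∈ usphere n, F x₀ ≤ F y := fun y hy => hx₀' hy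
  have hx₁ : ∀ y ∈ usphere n, F y ≤ F x₁ := fun y hy => hx₁' hy
  set a : ℝ := F x₀ with ha_def
  set b : ℝ := F x₁ with hb_def
  have hapos : 0 < a := hFpos x₀ hx₀s
  have hab : a ≤ b := hx₁ x₀ hx₀s
  have hIcc_sub : Icc a b ⊆ Ioi 0 := fun t ht => lt_of_lt_of_le hapos ht.1
  have hGconv : StrictConvexOn ℝ (Icc a b) G := hconv.subset hIcc_sub (convex_Icc _ _)
  have hGcont : ContinuousOn G (Icc a b) := by
    apply hφc.comp
    · exact ContinuousOn.rpow_const (continuousOn_id) fun x hx =>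
        Or.inl (ne_of_gt (hIcc_sub hx))
    · intro x hx
      exact Real.rpow_pos_of_pos (hIcc_sub hx) _
  -- the weighted measure
  set w : Euc n → ℝ≥0 := fun u => Real.toNNReal (W u) with hw_def
  have hWaem : AEMeasurable W μ := hWcont.aemeasurable hS
  have hwaem : AEMeasurable w μ := continuous_real_toNNReal.measurable.comp_aemeasurable hWaem
  have hwaem' : AEMeasurable (fun u => (w u : ℝ≥0∞)) μ := hwaem.coe_nnreal_ennreal
  set ν : Measure (Euc n) := μ.withDensity (fun u => (w u : ℝ≥0∞)) with hν_def
  have hνac : ν ≪ μ := withDensity_absolutelyContinuous _ _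
  have hνuniv : ν univ = ∫⁻ u, (w u : ℝ≥0∞) ∂μ := by
    rw [hν_def, withDensity_apply _ MeasurableSet.univ, setLIntegral_univ]
  obtain ⟨xM, hxMs, hxM'⟩ := hcompact.exists_isMaxOn hne hWcont
  obtain ⟨xm, hxms, hxm'⟩ := hcompact.exists_isMinOn hne hWcont
  have hxM : ∀ y ∈ usphere n, W y ≤ W xM := fun y hy => hxM' hy
  have hxm : ∀ y ∈ usphere n, W xm ≤ W y := fun y hy => hxm' hy
  have hmpos : 0 < W xm := hWpos xm hxms
  haveI hνfin : IsFiniteMeasure ν := by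
    constructor
    rw [hνuniv]
    calc ∫⁻ u, (w u : ℝ≥0∞) ∂μ ≤ ∫⁻ _, ENNReal.ofReal (W xM) ∂μ := by
          apply lintegral_mono_ae
          filter_upwards [hae_sphere] with u hu
          rw [hw_def]
          exact ENNReal.coe_le_coe.2 (Real.toNNReal_mono (hxM u hu))
      _ = ENNReal.ofReal (W xM) * μ univ := by rw [lintegral_const]
      _ < ⊤ := ENNReal.mul_lt_top ENNReal.ofReal_lt_top (measure_lt_top μ _)
  have hνpos : 0 < ν univ := by
    rw [hνuniv]
    calc (0:ℝ≥0∞) < ENNReal.ofReal (W xm) * μ univ :=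
          ENNReal.mul_pos (ENNReal.ofReal_pos.2 hmpos).ne' hμpos.ne'
      _ = ∫⁻ _, ENNReal.ofReal (W xm) ∂μ := by rw [lintegral_const]
      _ ≤ ∫⁻ u, (w u : ℝ≥0∞) ∂μ := by
          apply lintegral_mono_ae
          filter_upwards [hae_sphere] with u hu
          exact ENNReal.coe_le_coe.2 (Real.toNNReal_mono (hxm u hu))
  -- a.e. membership and integrability with respect to ν
  have hνae_sphere : ∀ᵐ u ∂ν, u ∈ usphere n := hνac.ae_le hae_sphere
  have hFs : ∀ᵐ u ∂ν, F u ∈ Icc a b := hνae_sphere.mono fun u hu => ⟨hx₀ u hu, hx₁ u hu⟩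
  have hFaemν : AEMeasurable F ν := (hFcont.aemeasurable hS).mono_ac hνac
  have hFi : Integrable F ν := by
    refine (integrable_const b).mono' hFaemν.aestronglyMeasurable ?_
    filter_upwards [hFs] with u hu
    rw [Real.norm_eq_abs, abs_of_pos (lt_of_lt_of_le hapos hu.1)]
    exact hu.2
  have hGFcont : ContinuousOn (fun u => G (F u)) (usphere n) :=
    hGcont.comp hFcont fun u hu => ⟨hx₀ u hu, hx₁ u hu⟩
  have hGFaemν : AEMeasurable (fun u => G (F u)) ν := (hGFcont.aemeasurable hS).mono_ac hνac
  obtain ⟨tc, htc, htcmax⟩ := (isCompact_Icc (a := a) (b := b)).exists_isMaxOn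
    (nonempty_Icc.2 hab) hGcont.abs
  have hGFi : Integrable (fun u => G (F u)) ν := by
    refine (integrable_const |G tc|).mono' hGFaemν.aestronglyMeasurable ?_
    filter_upwards [hFs] with u hu
    rw [Real.norm_eq_abs]
    exact htcmax hu
  -- the three integrals
  set WL : Euc n → ℝ := fun u => ρL u ^ q * ρQ u ^ ((n:ℝ) - q) with hWL_def
  have hWLcont : ContinuousOn WL (usphere n) :=
    (hρL.rpow_const (fun x hx => Or.inl (hρLpos x hx).ne')).mul
      (hρQ.rpow_const (fun x hx => Or.inl (hρQpos x hx).ne'))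
  have hWLpos : ∀ u ∈ usphere n, 0 < WL u := fun u hu =>
    mul_pos (Real.rpow_pos_of_pos (hρLpos u hu) _) (Real.rpow_pos_of_pos (hρQpos u hu) _)
  set IK : ℝ := ∫ u, W u ∂μ with hIK_def
  set IL : ℝ := ∫ u, WL u ∂μ with hIL_def
  set Iφ : ℝ := ∫ u, φ (ρL u / ρK u) * ρK u ^ q * ρQ u ^ ((n:ℝ) - q) ∂μ with hIφ_def
  have hWi : Integrable W μ := by
    refine (integrable_const (W xM)).mono' hWaem.aestronglyMeasurable ?_
    filter_upwards [hae_sphere] with u hu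
    rw [Real.norm_eq_abs, abs_of_pos (hWpos u hu)]
    exact hxM u hu
  obtain ⟨xL, hxLs, hxL'⟩ := hcompact.exists_isMaxOn hne hWLcont
  obtain ⟨xl, hxls, hxl'⟩ := hcompact.exists_isMinOn hne hWLcont
  have hWLi : Integrable WL μ := by
    refine (integrable_const (WL xL)).mono' ((hWLcont.aemeasurable hS)).aestronglyMeasurable ?_
    filter_upwards [hae_sphere] with u hu
    rw [Real.norm_eq_abs, abs_of_pos (hWLpos u hu)]
    exact hxL' hu
  have hμunivtR : 0 < (μ univ).toReal := ENNReal.toReal_pos hμpos.ne' (measure_ne_top μ _)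
  have hIKpos : 0 < IK := by
    have h1 : ∫ _, W xm ∂μ ≤ ∫ u, W u ∂μ := integral_mono_ae (integrable_const _) hWi
      (hae_sphere.mono fun u hu => hxm u hu)
    rw [integral_const, smul_eq_mul, measureReal_def] at h1
    nlinarith
  have hILpos : 0 < IL := by
    have h1 : ∫ _, WL xl ∂μ ≤ ∫ u, WL u ∂μ := integral_mono_ae (integrable_const _) hWLi
      (hae_sphere.mono fun u hu => hxl' hu)
    rw [integral_const, smul_eq_mul, measureReal_def] at h1
    have := hWLpos xl hxls
    nlinarith
  -- integral identities
  have hwcoe : ∀ᵐ u ∂μ, ((w u : ℝ)) = W u :=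
    hae_sphere.mono fun u hu => Real.coe_toNNReal _ (hWpos u hu).le
  have hInt1 : ∫ u, F u ∂ν = IL := by
    rw [hν_def, integral_withDensity_eq_integral_smul₀ hwaem, hIL_def]
    apply integral_congr_ae
    filter_upwards [hwcoe, hae_sphere] with u hcoe hu
    have hKq : ρK u ^ q ≠ 0 := (Real.rpow_pos_of_pos (hρKpos u hu) q).ne'
    rw [NNReal.smul_def, hcoe, hW_def, hF_def, hWL_def]
    simp only
    rw [Real.div_rpow (hρLpos u hu).le (hρKpos u hu).le]
    field_simp
    ring_nf
    rw [mul_inv_cancel_right₀ hKq]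
  have hInt2 : ∫ u, G (F u) ∂ν = Iφ := by
    rw [hν_def, integral_withDensity_eq_integral_smul₀ hwaem, hIφ_def]
    apply integral_congr_ae
    filter_upwards [hwcoe, hae_sphere] with u hcoe hu
    have hGF : G (F u) = φ (ρL u / ρK u) := by
      rw [hG_def, hF_def]
      simp only
      rw [one_div, Real.rpow_rpow_inv (div_nonneg (hρLpos u hu).le (hρKpos u hu).le) hq]
    rw [NNReal.smul_def, smul_eq_mul, hcoe, hGF, hW_def]
    simp only
    ring
  have hInt3 : ∫ u, (1:ℝ) ∂ν = IK := by
    rw [hν_def, integral_withDensity_eq_integral_smul₀ hwaem, hIK_def]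
    apply integral_congr_ae
    filter_upwards [hwcoe] with u hcoe
    rw [NNReal.smul_def, smul_eq_mul, mul_one, hcoe]
  have hνunivtoReal : (ν univ).toReal = IK := by
    rw [integral_const, smul_eq_mul, mul_one] at hInt3
    exact hInt3
  -- the averages
  have havgF : ⨍ u, F u ∂ν = IL / IK := by
    rw [average_eq, hInt1, measureReal_def, hνunivtoReal, smul_eq_mul, inv_mul_eq_div]
  have havgGF : ⨍ u, G (F u) ∂ν = Iφ / IK := by
    rw [average_eq, hInt2, measureReal_def, hνunivtoReal, smul_eq_mul, inv_mul_eq_div]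
  -- rewrite the equality hypothesis
  have hn0 : (n:ℝ) ≠ 0 := Nat.cast_ne_zero.2 (by omega)
  have hVqK : Vq n q ρK ρQ = (1/(n:ℝ)) * IK := by
    rw [Vq, hIK_def, hμdef]
  have hVqL : Vq n q ρL ρQ = (1/(n:ℝ)) * IL := by
    rw [Vq, hIL_def, hμdef]
  have hVqφ : Vqφ n q φ ρK ρL ρQ = (1/(n:ℝ)) * Iφ := by
    rw [Vqφ, hIφ_def, hμdef]
  have hratio : Vq n q ρL ρQ / Vq n q ρK ρQ = IL / IK := by
    rw [hVqL, hVqK, mul_div_mul_left _ _ (one_div_ne_zero hn0)]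
  have heq' : Iφ = IK * φ ((IL / IK) ^ (1/q)) := by
    rw [hVqφ, hratio, hVqK] at heq
    have h2 : (1/(n:ℝ)) * Iφ = (1/(n:ℝ)) * (IK * φ ((IL / IK) ^ (1/q))) := by
      rw [heq]; ring
    exact mul_left_cancel₀ (one_div_ne_zero hn0) h2
  -- Jensen's inequality, strict version
  rcases hGconv.ae_eq_const_or_map_average_lt hGcont isClosed_Icc hFs hFi hGFi with hconst | hlt
  swap
  · exfalso
    rw [havgF, havgGF] at hlt
    have hG1 : G (IL / IK) = φ ((IL / IK) ^ (1/q)) := by rw [hG_def]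
    have hG2 : Iφ / IK = φ ((IL / IK) ^ (1/q)) := by
      rw [heq', mul_comm, mul_div_assoc, div_self hIKpos.ne', mul_one]
    rw [hG1, hG2] at hlt
    exact lt_irrefl _ hlt
  -- the equality case
  set m₀ : ℝ := IL / IK with hm₀_def
  have hm₀pos : 0 < m₀ := div_pos hILpos hIKpos
  have hconst' : ∀ᵐ u ∂ν, F u = m₀ := by
    have h := hconst.mono fun u hu => hu
    rw [havgF] at h
    exact h
  -- transfer to μ
  have hνeq : ν = μ.withDensity (hwaem'.mk _) := by
    rw [hν_def]; exact withDensity_congr_ae hwaem'.ae_eq_mk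
  have h1 : ∀ᵐ u ∂μ, (hwaem'.mk _) u ≠ 0 → F u = m₀ := by
    rw [← ae_withDensity_iff hwaem'.measurable_mk, ← hνeq]
    exact hconst'
  have hμae : ∀ᵐ u ∂μ, F u = m₀ := by
    filter_upwards [h1, hwaem'.ae_eq_mk, hae_sphere] with u h hmk hu
    apply h
    rw [← hmk]
    exact ENNReal.coe_ne_zero.2 (Real.toNNReal_pos.2 (hWpos u hu)).ne'
  -- upgrade from a.e. to everywhere, using continuity and positivity on caps
  have hall : ∀ u ∈ usphere n, F u = m₀ := by
    by_contra hcon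
    push_neg at hcon
    obtain ⟨u₁, hu₁s, hu₁⟩ := hcon
    have hcw : ContinuousWithinAt F (usphere n) u₁ := hFcont u₁ hu₁s
    have hnb : ∀ᶠ x in 𝓝[usphere n] u₁, F x ≠ m₀ :=
      hcw (isOpen_ne.mem_nhds hu₁)
    obtain ⟨U, hUopen, hU₁, hUsub⟩ := mem_nhdsWithin.1 hnb
    obtain ⟨r, hr, hball⟩ := Metric.isOpen_iff.1 hUopen u₁ hU₁
    have hnull : μ {u | ¬ F u = m₀} = 0 := ae_iff.1 hμae
    have hsub2 : usphere n ∩ ball u₁ r ⊆ {u | ¬ F u = m₀} := fun x hx =>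
      hUsub ⟨hball hx.2, hx.1⟩
    have hz : μ (usphere n ∩ ball u₁ r) = 0 := measure_mono_null hsub2 hnull
    rw [hμdef, smeas, Measure.restrict_apply (hS.inter measurableSet_ball)] at hz
    have hinter : (usphere n ∩ ball u₁ r) ∩ usphere n = usphere n ∩ ball u₁ r :=
      inter_eq_self_of_subset_left inter_subset_left
    rw [hinter] at hz
    exact absurd hz (cap_pos hn hu₁s hr).ne'
  -- conclusion
  refine ⟨m₀ ^ (1/q), Real.rpow_pos_of_pos hm₀pos _, fun u hu => ?_⟩
  have hFu : (ρL u / ρK u) ^ q = m₀ := by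
    have := hall u hu
    rwa [hF_def] at this
  have hdiv : ρL u / ρK u = m₀ ^ (1/q) := by
    rw [← hFu, one_div, Real.rpow_rpow_inv (div_nonneg (hρLpos u hu).le (hρKpos u hu).le) hq]
  exact (div_eq_iff (hρKpos u hu).ne').1 hdiv
end
end
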